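/- arXiv:1304.1909 — 4 statements merged into one kernel-verified Lean document; each statement's English description precedes it below -/
import Mathlib

section
/- Let uv and st be two distinct edges of a network G, and for λ∈[0,1] let p(λ)=(1−λ)u+λv and φ(λ)=max_{q∈st} d(p(λ),q). Let ū, v̄ be the farthest points on st from u and v respectively, and t̄, s̄ the farthest points on uv from t and s, with t̄ lying between u and s̄. Then φ(λ) = λw_uv + d(u,ū) if p(λ)∈u t̄; φ(λ) = d(t̄,ū) (constant) if p(λ)∈t̄ s̄; and φ(λ) = (1−λ)w_uv + d(v,v̄) if p(λ)∈s̄ v. -/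
open Set

lemma key_greatest (E F w : ℝ) (hw : 0 < w) (hle1 : F - E ≤ w) (hle2 : E - F ≤ w) :
    IsGreatest {y : ℝ | ∃ mu ∈ Icc (0:ℝ) 1, y = min (E + mu * w) (F + (1 - mu) * w)}
      ((E + F + w) / 2) := by
  constructor
  · refine ⟨(F - E + w) / (2 * w), ⟨div_nonneg (by linarith) (by linarith), by rw [div_le_one (by linarith)]; linarith⟩, ?_⟩
    have hA : E + (F - E + w) / (2 * w) * w = (E + F + w) / 2 := by
      field_simp; ring
    have hB : F + (1 - (F - E + w) / (2 * w)) * w = (E + F + w) / 2 := by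
      field_simp; ring
    rw [hA, hB, min_self]
  · rintro y ⟨mu, hmu, rfl⟩
    have ha := min_le_left (E + mu * w) (F + (1 - mu) * w)
    have hb := min_le_right (E + mu * w) (F + (1 - mu) * w)
    linarith

/-- Lemma 3 (Frank): the farthest distance `phi lam` from the point `p lam` on edge `uv` to
the edge `st` (distinct from `uv`).  Distances from the four endpoints are
`dus = d(u,s)`, `dut = d(u,t)`, `dvs = d(v,s)`, `dvt = d(v,t)`; edge weights `w1 = w_uv`,
`w2 = w_st`.  The farthest point `t̄` on `uv` from `t` sits at parameter
`lamt = (dvt - dut + w1)/(2*w1)` and `s̄` at `lams = (dvs - dus + w1)/(2*w1)`;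
`t̄ ∈ u s̄` means `lamt ≤ lams`.  Then `phi` is ascending with slope `w1` up to `t̄`
with `phi lam = lam*w1 + d(u,ū)`, constant `d(t̄,ū)` on `t̄ s̄`, and descending after `s̄`
with `phi lam = (1-lam)*w1 + d(v,v̄)`, where `d(u,ū) = (dus + w2 + dut)/2` and
`d(v,v̄) = (dvs + w2 + dvt)/2`. -/
theorem edge_to_edge_farthest_distance (dus dut dvs dvt w1 w2 : ℝ)
    (hw1 : 0 < w1) (hw2 : 0 < w2)
    (h1 : 0 ≤ dus) (h2 : 0 ≤ dut) (h3 : 0 ≤ dvs) (h4 : 0 ≤ dvt)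
    (htriu : |dus - dut| ≤ w2) (htriv : |dvs - dvt| ≤ w2)
    (htris : |dus - dvs| ≤ w1) (htrit : |dut - dvt| ≤ w1)
    (horder : (dvt - dut + w1) / (2 * w1) ≤ (dvs - dus + w1) / (2 * w1)) :
    ∀ lam ∈ Icc (0:ℝ) 1,
      (lam ≤ (dvt - dut + w1) / (2 * w1) →
        IsGreatest {y : ℝ | ∃ mu ∈ Icc (0:ℝ) 1, y =
            min (min (lam * w1 + dus + mu * w2) (lam * w1 + dut + (1 - mu) * w2))
                (min ((1 - lam) * w1 + dvs + mu * w2) ((1 - lam) * w1 + dvt + (1 - mu) * w2))}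
          (lam * w1 + (dus + w2 + dut) / 2)) ∧
      (lam ∈ Icc ((dvt - dut + w1) / (2 * w1)) ((dvs - dus + w1) / (2 * w1)) →
        IsGreatest {y : ℝ | ∃ mu ∈ Icc (0:ℝ) 1, y =
            min (min (lam * w1 + dus + mu * w2) (lam * w1 + dut + (1 - mu) * w2))
                (min ((1 - lam) * w1 + dvs + mu * w2) ((1 - lam) * w1 + dvt + (1 - mu) * w2))}
          ((dvt - dut + w1) / (2 * w1) * w1 + (dus + w2 + dut) / 2)) ∧
      ((dvs - dus + w1) / (2 * w1) ≤ lam →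
        IsGreatest {y : ℝ | ∃ mu ∈ Icc (0:ℝ) 1, y =
            min (min (lam * w1 + dus + mu * w2) (lam * w1 + dut + (1 - mu) * w2))
                (min ((1 - lam) * w1 + dvs + mu * w2) ((1 - lam) * w1 + dvt + (1 - mu) * w2))}
          ((1 - lam) * w1 + (dvs + w2 + dvt) / 2)) := by
  have h2w1 : (0:ℝ) < 2 * w1 := by linarith
  rw [abs_le] at htriu htriv htris htrit
  have horder' : dvt - dut ≤ dvs - dus := by
    have := (div_le_div_iff₀ h2w1 h2w1).mp horder
    nlinarith
  intro lam hlam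
  obtain ⟨hlam0, hlam1⟩ := hlam
  refine ⟨?_, ?_, ?_⟩
  · -- ascending part
    intro hcase
    have hlt : 2 * (lam * w1) ≤ dvt - dut + w1 := by
      have := (le_div_iff₀ h2w1).mp hcase; linarith
    have hls : 2 * (lam * w1) ≤ dvs - dus + w1 := by linarith
    have hset : {y : ℝ | ∃ mu ∈ Icc (0:ℝ) 1, y =
            min (min (lam * w1 + dus + mu * w2) (lam * w1 + dut + (1 - mu) * w2))
                (min ((1 - lam) * w1 + dvs + mu * w2) ((1 - lam) * w1 + dvt + (1 - mu) * w2))}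
        = {y : ℝ | ∃ mu ∈ Icc (0:ℝ) 1, y =
            min ((lam * w1 + dus) + mu * w2) ((lam * w1 + dut) + (1 - mu) * w2)} := by
      ext y
      simp only [mem_setOf_eq]
      refine exists_congr fun mu => and_congr_right fun hmu => ?_
      have e1 : min (lam * w1 + dus + mu * w2) ((1 - lam) * w1 + dvs + mu * w2)
          = lam * w1 + dus + mu * w2 := min_eq_left (by linarith)
      have e2 : min (lam * w1 + dut + (1 - mu) * w2) ((1 - lam) * w1 + dvt + (1 - mu) * w2)
          = lam * w1 + dut + (1 - mu) * w2 := min_eq_left (by linarith)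
      rw [min_min_min_comm, e1, e2]
    rw [hset, show lam * w1 + (dus + w2 + dut) / 2
        = ((lam * w1 + dus) + (lam * w1 + dut) + w2) / 2 from by ring]
    exact key_greatest _ _ _ hw2 (by linarith) (by linarith)
  · -- constant part
    rintro ⟨hge, hle⟩
    have hgt : dvt - dut + w1 ≤ 2 * (lam * w1) := by
      have := (div_le_iff₀ h2w1).mp hge; linarith
    have hls : 2 * (lam * w1) ≤ dvs - dus + w1 := by
      have := (le_div_iff₀ h2w1).mp hle; linarith
    have hset : {y : ℝ | ∃ mu ∈ Icc (0:ℝ) 1, y =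
            min (min (lam * w1 + dus + mu * w2) (lam * w1 + dut + (1 - mu) * w2))
                (min ((1 - lam) * w1 + dvs + mu * w2) ((1 - lam) * w1 + dvt + (1 - mu) * w2))}
        = {y : ℝ | ∃ mu ∈ Icc (0:ℝ) 1, y =
            min ((lam * w1 + dus) + mu * w2) (((1 - lam) * w1 + dvt) + (1 - mu) * w2)} := by
      ext y
      simp only [mem_setOf_eq]
      refine exists_congr fun mu => and_congr_right fun hmu => ?_
      have e1 : min (lam * w1 + dus + mu * w2) ((1 - lam) * w1 + dvs + mu * w2)
          = lam * w1 + dus + mu * w2 := min_eq_left (by linarith)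
      have e2 : min (lam * w1 + dut + (1 - mu) * w2) ((1 - lam) * w1 + dvt + (1 - mu) * w2)
          = (1 - lam) * w1 + dvt + (1 - mu) * w2 := min_eq_right (by linarith)
      rw [min_min_min_comm, e1, e2]
    have htarget : (dvt - dut + w1) / (2 * w1) * w1 + (dus + w2 + dut) / 2
        = ((lam * w1 + dus) + ((1 - lam) * w1 + dvt) + w2) / 2 := by
      field_simp
      ring
    rw [hset, htarget]
    exact key_greatest _ _ _ hw2 (by linarith) (by linarith)
  · -- descending part
    intro hcase
    have hls : dvs - dus + w1 ≤ 2 * (lam * w1) := by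
      have := (div_le_iff₀ h2w1).mp hcase; linarith
    have hlt : dvt - dut + w1 ≤ 2 * (lam * w1) := by linarith
    have hset : {y : ℝ | ∃ mu ∈ Icc (0:ℝ) 1, y =
            min (min (lam * w1 + dus + mu * w2) (lam * w1 + dut + (1 - mu) * w2))
                (min ((1 - lam) * w1 + dvs + mu * w2) ((1 - lam) * w1 + dvt + (1 - mu) * w2))}
        = {y : ℝ | ∃ mu ∈ Icc (0:ℝ) 1, y =
            min (((1 - lam) * w1 + dvs) + mu * w2) (((1 - lam) * w1 + dvt) + (1 - mu) * w2)} := by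
      ext y
      simp only [mem_setOf_eq]
      refine exists_congr fun mu => and_congr_right fun hmu => ?_
      have e1 : min (lam * w1 + dus + mu * w2) ((1 - lam) * w1 + dvs + mu * w2)
          = (1 - lam) * w1 + dvs + mu * w2 := min_eq_right (by linarith)
      have e2 : min (lam * w1 + dut + (1 - mu) * w2) ((1 - lam) * w1 + dvt + (1 - mu) * w2)
          = (1 - lam) * w1 + dvt + (1 - mu) * w2 := min_eq_right (by linarith)
      rw [min_min_min_comm, e1, e2]
    rw [hset, show (1 - lam) * w1 + (dvs + w2 + dvt) / 2
        = (((1 - lam) * w1 + dvs) + ((1 - lam) * w1 + dvt) + w2) / 2 from by ring]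
    exact key_greatest _ _ _ hw2 (by linarith) (by linarith)
end

section
/- Let uv be an edge of a network G with weight w_uv, let c be the midpoint of uv, let ū be the farthest point on uv from u, and v̄ the farthest point on uv from v. Then ū lies between c and v, v̄ lies between u and c, w_{uv̄}=w_{v ū}, and for p(λ)=(1−λ)u+λv the function φ(λ)=max_{q∈uv} d(p(λ),q) equals (w_uv+d(u,v))/2 when p(λ)∈u v̄ or p(λ)∈ū v, equals (1−λ)w_uv when p(λ)∈v̄ c, and equals λw_uv when p(λ)∈c ū. -/
open Set

/-- Lemma 4 (edge to itself): on an edge `uv` of weight `w`, with `duv = d(u,v)` the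
shortest-path distance between the endpoints (possibly `< w` via the rest of the network),
the distance from `p lam` to `q mu` on `uv` is
`d3 lam mu = min (|lam-mu|*w) (min (lam*w + duv + (1-mu)*w) ((1-lam)*w + duv + mu*w))`.
The farthest point `ū` on `uv` from `u` sits at `lamubar = (w+duv)/(2w)`, `v̄` at
`lamvbar = (w-duv)/(2w)`; `v̄ ∈ uc`, `ū ∈ cv` for the midpoint `c` (parameter 1/2), and
`w_{uv̄} = w_{v ū}`.  The farthest-distance function equals `(w+duv)/2` on `u v̄` and on
`ū v`, equals `(1-lam)*w` on `v̄ c`, and `lam*w` on `c ū`. -/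
theorem edge_to_self_farthest_distance (w duv : ℝ) (hw : 0 < w) (h0 : 0 ≤ duv)
    (hduv : duv ≤ w) :
    ((w - duv) / (2 * w) ≤ 1 / 2) ∧ (1 / 2 ≤ (w + duv) / (2 * w)) ∧
    ((w - duv) / (2 * w) = 1 - (w + duv) / (2 * w)) ∧
    ∀ lam ∈ Icc (0:ℝ) 1,
      (lam ≤ (w - duv) / (2 * w) →
        IsGreatest {y : ℝ | ∃ mu ∈ Icc (0:ℝ) 1, y =
            min (|lam - mu| * w) (min (lam * w + duv + (1 - mu) * w) ((1 - lam) * w + duv + mu * w))}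
          ((w + duv) / 2)) ∧
      (lam ∈ Icc ((w - duv) / (2 * w)) (1 / 2) →
        IsGreatest {y : ℝ | ∃ mu ∈ Icc (0:ℝ) 1, y =
            min (|lam - mu| * w) (min (lam * w + duv + (1 - mu) * w) ((1 - lam) * w + duv + mu * w))}
          ((1 - lam) * w)) ∧
      (lam ∈ Icc (1 / 2) ((w + duv) / (2 * w)) →
        IsGreatest {y : ℝ | ∃ mu ∈ Icc (0:ℝ) 1, y =
            min (|lam - mu| * w) (min (lam * w + duv + (1 - mu) * w) ((1 - lam) * w + duv + mu * w))}
          (lam * w)) ∧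
      ((w + duv) / (2 * w) ≤ lam →
        IsGreatest {y : ℝ | ∃ mu ∈ Icc (0:ℝ) 1, y =
            min (|lam - mu| * w) (min (lam * w + duv + (1 - mu) * w) ((1 - lam) * w + duv + mu * w))}
          ((w + duv) / 2)) := by
  have hw2 : (0:ℝ) < 2 * w := by linarith
  have hA : (w - duv) / (2 * w) * (2 * w) = w - duv := div_mul_cancel₀ _ (ne_of_gt hw2)
  have hB : (w + duv) / (2 * w) * (2 * w) = w + duv := div_mul_cancel₀ _ (ne_of_gt hw2)
  have hBw : (w + duv) / (2 * w) * w = (w + duv) / 2 := by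
    field_simp
  have hB0 : 0 ≤ (w + duv) / (2 * w) := div_nonneg (by linarith) (le_of_lt hw2)
  have key : ∀ lam mu : ℝ,
      min (|lam - mu| * w) (min (lam * w + duv + (1 - mu) * w) ((1 - lam) * w + duv + mu * w))
        ≤ (w + duv) / 2 := by
    intro lam mu
    rcases le_total lam mu with h | h
    · rw [abs_of_nonpos (by linarith)]
      have h1 := min_le_left (-(lam - mu) * w)
        (min (lam * w + duv + (1 - mu) * w) ((1 - lam) * w + duv + mu * w))
      have h2 := le_trans (min_le_right (-(lam - mu) * w) _)
        (min_le_left (lam * w + duv + (1 - mu) * w) ((1 - lam) * w + duv + mu * w))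
      have hs : -(lam - mu) * w + (lam * w + duv + (1 - mu) * w) = w + duv := by ring
      linarith
    · rw [abs_of_nonneg (by linarith)]
      have h1 := min_le_left ((lam - mu) * w)
        (min (lam * w + duv + (1 - mu) * w) ((1 - lam) * w + duv + mu * w))
      have h2 := le_trans (min_le_right ((lam - mu) * w) _)
        (min_le_right (lam * w + duv + (1 - mu) * w) ((1 - lam) * w + duv + mu * w))
      have hs : (lam - mu) * w + ((1 - lam) * w + duv + mu * w) = w + duv := by ring
      linarith
  refine ⟨?_, ?_, ?_, ?_⟩
  · rw [div_le_div_iff₀ hw2 two_pos]; linarith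
  · rw [div_le_div_iff₀ two_pos hw2]; linarith
  · have : (1 - (w + duv) / (2 * w)) * (2 * w) = w - duv := by
      have := hB; nlinarith [hB]
    have h2 := hA
    nlinarith [this, h2]
  · rintro lam ⟨hl0, hl1⟩
    refine ⟨?_, ?_, ?_, ?_⟩
    · -- Case 1 : lam ≤ (w - duv)/(2w)
      intro hcase
      have hl2w : lam * (2 * w) ≤ w - duv := by
        calc lam * (2 * w) ≤ (w - duv) / (2 * w) * (2 * w) :=
              mul_le_mul_of_nonneg_right hcase (le_of_lt hw2)
          _ = w - duv := hA
      constructor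
      · refine ⟨lam + (w + duv) / (2 * w), ⟨by linarith, ?_⟩, ?_⟩
        · nlinarith [hB]
        · have e1 : |lam - (lam + (w + duv) / (2 * w))| * w = (w + duv) / 2 := by
            rw [show lam - (lam + (w + duv) / (2 * w)) = -((w + duv) / (2 * w)) by ring,
              abs_neg, abs_of_nonneg hB0, hBw]
          have e2 : lam * w + duv + (1 - (lam + (w + duv) / (2 * w))) * w = (w + duv) / 2 := by
            have : (1 - (lam + (w + duv) / (2 * w))) * w = w - lam * w - (w + duv) / 2 := by
              rw [sub_mul, add_mul, one_mul, hBw]; ring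
            rw [this]; ring
          have e3 : (w + duv) / 2 ≤ (1 - lam) * w + duv + (lam + (w + duv) / (2 * w)) * w := by
            have : (lam + (w + duv) / (2 * w)) * w = lam * w + (w + duv) / 2 := by
              rw [add_mul, hBw]
            rw [this]; nlinarith
          rw [e1, e2, min_eq_left e3, min_self]
      · rintro y ⟨mu, hmu, rfl⟩; exact key lam mu
    · -- Case 2 : (w - duv)/(2w) ≤ lam ≤ 1/2
      rintro ⟨hc1, hc2⟩
      have hl2w : w - duv ≤ lam * (2 * w) := by
        calc w - duv = (w - duv) / (2 * w) * (2 * w) := hA.symm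
          _ ≤ lam * (2 * w) := mul_le_mul_of_nonneg_right hc1 (le_of_lt hw2)
      constructor
      · refine ⟨1, ⟨zero_le_one, le_refl 1⟩, ?_⟩
        have e1 : |lam - 1| * w = (1 - lam) * w := by
          rw [abs_of_nonpos (by linarith)]; ring
        have e2 : (1 - lam) * w ≤ lam * w + duv + (1 - 1) * w := by nlinarith
        have e3 : (1 - lam) * w ≤ (1 - lam) * w + duv + 1 * w := by nlinarith
        rw [e1, min_eq_left (le_min e2 e3)]
      · rintro y ⟨mu, ⟨hm0, hm1⟩, rfl⟩
        refine le_trans (min_le_left _ _) ?_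
        have : |lam - mu| ≤ 1 - lam := by
          rcases le_total lam mu with h | h
          · rw [abs_of_nonpos (by linarith)]; linarith
          · rw [abs_of_nonneg (by linarith)]; linarith
        nlinarith
    · -- Case 3 : 1/2 ≤ lam ≤ (w + duv)/(2w)
      rintro ⟨hc1, hc2⟩
      have hl2w : lam * (2 * w) ≤ w + duv := by
        calc lam * (2 * w) ≤ (w + duv) / (2 * w) * (2 * w) :=
              mul_le_mul_of_nonneg_right hc2 (le_of_lt hw2)
          _ = w + duv := hB
      constructor
      · refine ⟨0, ⟨le_refl 0, zero_le_one⟩, ?_⟩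
        have e1 : |lam - 0| * w = lam * w := by
          rw [sub_zero, abs_of_nonneg hl0]
        have e2 : lam * w ≤ lam * w + duv + (1 - 0) * w := by nlinarith
        have e3 : lam * w ≤ (1 - lam) * w + duv + 0 * w := by nlinarith
        rw [e1, min_eq_left (le_min e2 e3)]
      · rintro y ⟨mu, ⟨hm0, hm1⟩, rfl⟩
        refine le_trans (min_le_left _ _) ?_
        have : |lam - mu| ≤ lam := by
          rcases le_total lam mu with h | h
          · rw [abs_of_nonpos (by linarith)]; linarith
          · rw [abs_of_nonneg (by linarith)]; linarith
        nlinarith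
    · -- Case 4 : (w + duv)/(2w) ≤ lam
      intro hcase
      have hl2w : w + duv ≤ lam * (2 * w) := by
        calc w + duv = (w + duv) / (2 * w) * (2 * w) := hB.symm
          _ ≤ lam * (2 * w) := mul_le_mul_of_nonneg_right hcase (le_of_lt hw2)
      constructor
      · refine ⟨lam - (w + duv) / (2 * w), ⟨by linarith [le_trans hB0 hcase, hcase], ?_⟩, ?_⟩
        · have : (w + duv) / (2 * w) ≥ 0 := hB0
          linarith
        · have e1 : |lam - (lam - (w + duv) / (2 * w))| * w = (w + duv) / 2 := by
            rw [show lam - (lam - (w + duv) / (2 * w)) = (w + duv) / (2 * w) by ring,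
              abs_of_nonneg hB0, hBw]
          have e3 : (1 - lam) * w + duv + (lam - (w + duv) / (2 * w)) * w = (w + duv) / 2 := by
            have : (lam - (w + duv) / (2 * w)) * w = lam * w - (w + duv) / 2 := by
              rw [sub_mul, hBw]
            rw [this]; ring
          have e2 : (w + duv) / 2 ≤ lam * w + duv + (1 - (lam - (w + duv) / (2 * w))) * w := by
            have : (1 - (lam - (w + duv) / (2 * w))) * w = w - lam * w + (w + duv) / 2 := by
              rw [sub_mul, sub_mul, one_mul, hBw]; ring
            rw [this]; nlinarith
          rw [e1, e3, min_eq_right e2, min_self]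
      · rintro y ⟨mu, hmu, rfl⟩; exact key lam mu
end

section
/- On an edge uv of a network G with m edges, the eccentricity function λ ↦ ecc(p(λ)) = max_{st∈E} φ_{uv}^{st}(λ) is continuous and piecewise linear, and if k is the number of edges of G containing a farthest point of some point of uv, then this upper envelope consists of at most 4k+1 linear segments. -/
open Set

/-- A finite simple undirected network on `n` vertices with positive edge weights. -/
structure WGraph (n : ℕ) where
  adj : Fin n → Fin n → Bool
  symm : ∀ u v, adj u v = adj v u
  loopless : ∀ u, adj u u = false
  w : Fin n → Fin n → ℝ
  wsymm : ∀ u v, w u v = w v u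
  wpos : ∀ u v, adj u v = true → 0 < w u v

variable {n : ℕ}

def WGraph.toSimple (G : WGraph n) : SimpleGraph (Fin n) where
  Adj u v := G.adj u v = true
  symm := ⟨fun u v (h : G.adj u v = true) => by show G.adj v u = true; rw [G.symm]; exact h⟩
  loopless := ⟨fun u (h : G.adj u u = true) => by simp [G.loopless u] at h⟩

instance (G : WGraph n) : DecidableRel G.toSimple.Adj :=
  fun u v => inferInstanceAs (Decidable (G.adj u v = true))

/-- Total weight of a walk. -/
noncomputable def WGraph.walkWeight (G : WGraph n) {u v : Fin n}
    (p : G.toSimple.Walk u v) : ℝ :=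
  (p.darts.map fun d => G.w d.toProd.1 d.toProd.2).sum

/-- Weighted shortest-path distance between vertices. -/
noncomputable def WGraph.vdist (G : WGraph n) (u v : Fin n) : ℝ :=
  sInf {x | ∃ p : G.toSimple.Walk u v, x = G.walkWeight p}

/-- Network distance between the point at parameter `a` on edge `uv` and the point at
parameter `b` on edge `st`: the minimum over routes through the endpoints, together with
the direct route along the edge when the two edges coincide. -/
noncomputable def WGraph.pdist (G : WGraph n) (u v : Fin n) (a : ℝ) (s t : Fin n) (b : ℝ) : ℝ :=
  let base := min
    (min (a * G.w u v + G.vdist u s + b * G.w s t)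
         (a * G.w u v + G.vdist u t + (1 - b) * G.w s t))
    (min ((1 - a) * G.w u v + G.vdist v s + b * G.w s t)
         ((1 - a) * G.w u v + G.vdist v t + (1 - b) * G.w s t))
  if u = s ∧ v = t then min (|a - b| * G.w u v) base
  else if u = t ∧ v = s then min (|a - (1 - b)| * G.w u v) base
  else base

/-- Eccentricity of the point at parameter `a` on edge `uv`: the largest network distance
to any point of the network. -/
noncomputable def WGraph.eccOn (G : WGraph n) (u v : Fin n) (a : ℝ) : ℝ :=
  sSup {x | ∃ s t, G.adj s t = true ∧ ∃ b ∈ Icc (0:ℝ) 1, x = G.pdist u v a s t b}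

/-- A point of the network: an (oriented) edge together with a parameter in `[0,1]`. -/
abbrev NetPt (n : ℕ) := (Fin n × Fin n) × ℝ

def WGraph.validPt (G : WGraph n) (p : NetPt n) : Prop :=
  G.adj p.1.1 p.1.2 = true ∧ p.2 ∈ Icc (0:ℝ) 1

noncomputable def WGraph.pdistPt (G : WGraph n) (p q : NetPt n) : ℝ :=
  G.pdist p.1.1 p.1.2 p.2 q.1.1 q.1.2 q.2

noncomputable def WGraph.eccPt (G : WGraph n) (p : NetPt n) : ℝ :=
  G.eccOn p.1.1 p.1.2 p.2

/-- `f` is piecewise affine on `[0,1]` with at most `N` pieces. -/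
def PWAffine (f : ℝ → ℝ) (N : ℕ) : Prop :=
  ∃ t : Fin (N + 1) → ℝ, Monotone t ∧ t 0 = 0 ∧ t (Fin.last N) = 1 ∧
    ∀ i : Fin N, ∃ a b : ℝ, ∀ x ∈ Icc (t i.castSucc) (t i.succ), f x = a * x + b

-- ====== part B ======

lemma WGraph.walkWeight_nonneg (G : WGraph n) {u v : Fin n} (p : G.toSimple.Walk u v) :
    0 ≤ G.walkWeight p := by
  unfold WGraph.walkWeight
  apply List.sum_nonneg
  intro x hx
  simp only [List.mem_map] at hx
  obtain ⟨d, hd, rfl⟩ := hx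
  exact (G.wpos _ _ (show G.adj d.toProd.1 d.toProd.2 = true from d.adj)).le

lemma WGraph.vdist_nonneg (G : WGraph n) (u v : Fin n) : 0 ≤ G.vdist u v := by
  apply Real.sInf_nonneg
  rintro x ⟨p, rfl⟩
  exact G.walkWeight_nonneg p

lemma WGraph.vdist_self (G : WGraph n) (u : Fin n) : G.vdist u u = 0 := by
  apply le_antisymm
  · apply csInf_le ⟨0, fun x hx => by obtain ⟨p, rfl⟩ := hx; exact G.walkWeight_nonneg p⟩
    exact ⟨SimpleGraph.Walk.nil, by simp [WGraph.walkWeight]⟩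
  · exact G.vdist_nonneg u u

lemma supmin {W : ℝ} (hW : 0 < W) (P Q : ℝ) :
    IsGreatest {x | ∃ b ∈ Icc (0:ℝ) 1, x = min (P + b * W) (Q + (1 - b) * W)}
      (min (min ((P + Q + W) / 2) (P + W)) (Q + W)) := by
  constructor
  · rcases le_total (Q + W) P with h1 | h1
    · refine ⟨0, ⟨le_refl 0, zero_le_one⟩, ?_⟩
      rw [show P + 0 * W = P by ring, show Q + (1 - 0) * W = Q + W by ring,
        min_eq_right (le_min (show Q + W ≤ (P + Q + W) / 2 by linarith)
          (show Q + W ≤ P + W by linarith)),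
        min_eq_right (show Q + W ≤ P from h1)]
    · rcases le_total P (Q - W) with h2 | h2
      · refine ⟨1, ⟨zero_le_one, le_refl 1⟩, ?_⟩
        rw [show P + 1 * W = P + W by ring, show Q + (1 - 1) * W = Q by ring,
          min_eq_right (show P + W ≤ (P + Q + W) / 2 by linarith),
          min_eq_left (show P + W ≤ Q + W by linarith),
          min_eq_left (show P + W ≤ Q by linarith)]
      · refine ⟨(Q + W - P) / (2 * W), ⟨div_nonneg (by linarith) (by linarith), ?_⟩, ?_⟩
        · rw [div_le_one (by linarith)]; linarith
        · have e1 : P + (Q + W - P) / (2 * W) * W = (P + Q + W) / 2 := by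
            field_simp; ring
          have e2 : Q + (1 - (Q + W - P) / (2 * W)) * W = (P + Q + W) / 2 := by
            field_simp; ring
          rw [e1, e2, min_self,
            min_eq_left (show (P + Q + W) / 2 ≤ P + W by linarith),
            min_eq_left (show (P + Q + W) / 2 ≤ Q + W by linarith)]
  · rintro x ⟨b, ⟨hb0, hb1⟩, rfl⟩
    have e : Q + (1 - b) * W = Q + W - b * W := by ring
    have hbW0 : 0 ≤ b * W := mul_nonneg hb0 hW.le
    have hbW1 : b * W ≤ W := by nlinarith
    have m1 := min_le_left (P + b * W) (Q + (1 - b) * W)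
    have m2 := min_le_right (P + b * W) (Q + (1 - b) * W)
    exact le_min (le_min (by linarith) (by linarith)) (by linarith)

lemma min_absorb3 {x y z : ℝ} (h : x ≤ y) : min x (min y z) = min x z := by
  rw [← min_assoc, min_eq_left h]

lemma WGraph.pdist_eq (G : WGraph n) (u v s t : Fin n) (h1 : ¬(u = s ∧ v = t))
    (h2 : ¬(u = t ∧ v = s)) (a b : ℝ) :
    G.pdist u v a s t b =
      min (min (a * G.w u v + G.vdist u s) ((1 - a) * G.w u v + G.vdist v s) + b * G.w s t)
          (min (a * G.w u v + G.vdist u t) ((1 - a) * G.w u v + G.vdist v t) + (1 - b) * G.w s t) := by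
  unfold WGraph.pdist
  simp only [if_neg h1, if_neg h2]
  rw [min_min_min_comm, min_add_add_right, min_add_add_right]

lemma WGraph.phi_ne (G : WGraph n) (u v s t : Fin n) (hadj : G.adj s t = true)
    (h1 : ¬(u = s ∧ v = t)) (h2 : ¬(u = t ∧ v = s)) (a : ℝ) :
    IsGreatest {x | ∃ b ∈ Icc (0:ℝ) 1, x = G.pdist u v a s t b}
      (min (min ((min (a * G.w u v + G.vdist u s) ((1 - a) * G.w u v + G.vdist v s)
            + min (a * G.w u v + G.vdist u t) ((1 - a) * G.w u v + G.vdist v t) + G.w s t) / 2)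
          (min (a * G.w u v + G.vdist u s) ((1 - a) * G.w u v + G.vdist v s) + G.w s t))
        (min (a * G.w u v + G.vdist u t) ((1 - a) * G.w u v + G.vdist v t) + G.w s t)) := by
  have := supmin (G.wpos s t hadj)
    (min (a * G.w u v + G.vdist u s) ((1 - a) * G.w u v + G.vdist v s))
    (min (a * G.w u v + G.vdist u t) ((1 - a) * G.w u v + G.vdist v t))
  simpa only [← G.pdist_eq u v s t h1 h2 a] using this

lemma trap_cases (w A B C D W a M : ℝ)
    (hM : M = min (min ((min (a * w + A) ((1 - a) * w + C)
            + min (a * w + B) ((1 - a) * w + D) + W) / 2)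
          (min (a * w + A) ((1 - a) * w + C) + W))
        (min (a * w + B) ((1 - a) * w + D) + W)) :
    M = w * a + min ((A + B + W) / 2) (min (A + W) (B + W))
    ∨ M = (A + D + W + w) / 2
    ∨ M = (C + B + W + w) / 2
    ∨ M = -(w * a) + (w + min ((C + D + W) / 2) (min (C + W) (D + W))) := by
  have hP1 : min (a * w + A) ((1 - a) * w + C) ≤ a * w + A := min_le_left _ _
  have hP2 : min (a * w + A) ((1 - a) * w + C) ≤ (1 - a) * w + C := min_le_right _ _
  have hQ1 : min (a * w + B) ((1 - a) * w + D) ≤ a * w + B := min_le_left _ _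
  have hQ2 : min (a * w + B) ((1 - a) * w + D) ≤ (1 - a) * w + D := min_le_right _ _
  have hup : M ≤ w * a + min ((A + B + W) / 2) (min (A + W) (B + W)) := by
    rw [← min_add_add_left, ← min_add_add_left]
    refine le_min ?_ (le_min ?_ ?_) <;> rw [hM]
    · exact le_trans (le_trans (min_le_left _ _) (min_le_left _ _)) (by linarith)
    · exact le_trans (le_trans (min_le_left _ _) (min_le_right _ _)) (by linarith)
    · exact le_trans (min_le_right _ _) (by linarith)
  have hdown : M ≤ -(w * a) + (w + min ((C + D + W) / 2) (min (C + W) (D + W))) := by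
    rw [← min_add_add_left, ← min_add_add_left, ← min_add_add_left, ← min_add_add_left]
    refine le_min ?_ (le_min ?_ ?_) <;> rw [hM]
    · exact le_trans (le_trans (min_le_left _ _) (min_le_left _ _)) (by linarith)
    · exact le_trans (le_trans (min_le_left _ _) (min_le_right _ _)) (by linarith)
    · exact le_trans (min_le_right _ _) (by linarith)
  have hpc1 : min ((A + B + W) / 2) (min (A + W) (B + W)) ≤ (A + B + W) / 2 := min_le_left _ _
  have hpc2 : min ((A + B + W) / 2) (min (A + W) (B + W)) ≤ A + W :=
    le_trans (min_le_right _ _) (min_le_left _ _)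
  have hpc3 : min ((A + B + W) / 2) (min (A + W) (B + W)) ≤ B + W :=
    le_trans (min_le_right _ _) (min_le_right _ _)
  have hqc1 : min ((C + D + W) / 2) (min (C + W) (D + W)) ≤ (C + D + W) / 2 := min_le_left _ _
  have hqc2 : min ((C + D + W) / 2) (min (C + W) (D + W)) ≤ C + W :=
    le_trans (min_le_right _ _) (min_le_left _ _)
  have hqc3 : min ((C + D + W) / 2) (min (C + W) (D + W)) ≤ D + W :=
    le_trans (min_le_right _ _) (min_le_right _ _)
  rcases min_cases (min ((min (a * w + A) ((1 - a) * w + C)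
            + min (a * w + B) ((1 - a) * w + D) + W) / 2)
          (min (a * w + A) ((1 - a) * w + C) + W))
        (min (a * w + B) ((1 - a) * w + D) + W) with ⟨h, -⟩ | ⟨h, -⟩
  · rw [h] at hM
    rcases min_cases ((min (a * w + A) ((1 - a) * w + C)
            + min (a * w + B) ((1 - a) * w + D) + W) / 2)
          (min (a * w + A) ((1 - a) * w + C) + W) with ⟨h', -⟩ | ⟨h', -⟩
    · rw [h'] at hM
      rcases min_cases (a * w + A) ((1 - a) * w + C) with ⟨hp, -⟩ | ⟨hp, -⟩ <;>
        rcases min_cases (a * w + B) ((1 - a) * w + D) with ⟨hq, -⟩ | ⟨hq, -⟩ <;>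
          rw [hp, hq] at hM
      · exact Or.inl (le_antisymm hup (by rw [hM]; linarith))
      · exact Or.inr (Or.inl (by rw [hM]; ring))
      · exact Or.inr (Or.inr (Or.inl (by rw [hM]; ring)))
      · exact Or.inr (Or.inr (Or.inr (le_antisymm hdown (by rw [hM]; linarith))))
    · rw [h'] at hM
      rcases min_cases (a * w + A) ((1 - a) * w + C) with ⟨hp, -⟩ | ⟨hp, -⟩ <;> rw [hp] at hM
      · exact Or.inl (le_antisymm hup (by rw [hM]; linarith))
      · exact Or.inr (Or.inr (Or.inr (le_antisymm hdown (by rw [hM]; linarith))))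
  · rw [h] at hM
    rcases min_cases (a * w + B) ((1 - a) * w + D) with ⟨hq, -⟩ | ⟨hq, -⟩ <;> rw [hq] at hM
    · exact Or.inl (le_antisymm hup (by rw [hM]; linarith))
    · exact Or.inr (Or.inr (Or.inr (le_antisymm hdown (by rw [hM]; linarith))))


lemma min_absorb4 {x t1 t2 t3 t4 : ℝ} (h1 : x ≤ t1) (h4 : x ≤ t4) :
    min x (min (min t1 t2) (min t3 t4)) = min x (min t2 t3) := by
  apply le_antisymm
  · refine le_min (min_le_left _ _) (le_min ?_ ?_)
    · exact le_trans (min_le_right _ _) (le_trans (min_le_left _ _) (min_le_right _ _))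
    · exact le_trans (min_le_right _ _) (le_trans (min_le_right _ _) (min_le_left _ _))
  · refine le_min (min_le_left _ _) (le_min (le_min ?_ ?_) (le_min ?_ ?_))
    · exact le_trans (min_le_left _ _) h1
    · exact le_trans (min_le_right _ _) (min_le_left _ _)
    · exact le_trans (min_le_right _ _) (min_le_right _ _)
    · exact le_trans (min_le_left _ _) h4

lemma WGraph.pdist_self_eq (G : WGraph n) (u v : Fin n) (hw : 0 ≤ G.w u v) {a b : ℝ}
    (ha : a ∈ Icc (0:ℝ) 1) (hb : b ∈ Icc (0:ℝ) 1) :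
    G.pdist u v a u v b = min (|a - b| * G.w u v)
      (min (a * G.w u v + G.vdist u v + (1 - b) * G.w u v)
           ((1 - a) * G.w u v + G.vdist v u + b * G.w u v)) := by
  obtain ⟨ha0, ha1⟩ := ha
  obtain ⟨hb0, hb1⟩ := hb
  have habs : |a - b| ≤ a + b := abs_le.mpr ⟨by linarith, by linarith⟩
  have habs2 : |a - b| ≤ (1 - a) + (1 - b) := abs_le.mpr ⟨by linarith, by linarith⟩
  unfold WGraph.pdist
  rw [if_pos ⟨rfl, rfl⟩, G.vdist_self u, G.vdist_self v]
  exact min_absorb4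
    (by nlinarith [mul_le_mul_of_nonneg_right habs hw])
    (by nlinarith [mul_le_mul_of_nonneg_right habs2 hw])

lemma supself_half {w C : ℝ} (hw : 0 < w) (hC : 0 ≤ C) {a : ℝ} (ha0 : 0 ≤ a) :
    IsGreatest {x | ∃ b ∈ Icc (0:ℝ) a, x = min ((a - b) * w) ((1 - a) * w + C + b * w)}
      (min (a * w) ((w + C) / 2)) := by
  constructor
  · rcases le_total (a * w) ((w + C) / 2) with h1 | h1
    · refine ⟨0, ⟨le_refl 0, ha0⟩, ?_⟩
      rw [show (a - 0) * w = a * w by ring, min_eq_left h1,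
        min_eq_left (show a * w ≤ (1 - a) * w + C + 0 * w by linarith [show (1 - a) * w + C + 0 * w = w - a * w + C from by ring])]
    · refine ⟨a - (w + C) / (2 * w), ⟨?_, ?_⟩, ?_⟩
      · rw [sub_nonneg, div_le_iff₀ (by linarith)]; linarith
      · have : 0 ≤ (w + C) / (2 * w) := div_nonneg (by linarith) (by linarith)
        linarith
      · have e1 : (a - (a - (w + C) / (2 * w))) * w = (w + C) / 2 := by
          field_simp
          ring
        have e2 : (1 - a) * w + C + (a - (w + C) / (2 * w)) * w = (w + C) / 2 := by
          field_simp; ring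
        rw [e1, e2, min_self, min_eq_right h1]
  · rintro x ⟨b, ⟨hb0, hba⟩, rfl⟩
    have e1 : (a - b) * w = a * w - b * w := by ring
    have e2 : (1 - a) * w = w - a * w := by ring
    have hbw : 0 ≤ b * w := mul_nonneg hb0 hw.le
    have m1 := min_le_left ((a - b) * w) ((1 - a) * w + C + b * w)
    have m2 := min_le_right ((a - b) * w) ((1 - a) * w + C + b * w)
    exact le_min (by linarith) (by linarith)

lemma WGraph.phi_self (G : WGraph n) (u v : Fin n) (hw : 0 < G.w u v) {a : ℝ}
    (ha : a ∈ Icc (0:ℝ) 1) :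
    IsGreatest {x | ∃ b ∈ Icc (0:ℝ) 1, x = G.pdist u v a u v b}
      (max (min (a * G.w u v) ((G.w u v + G.vdist v u) / 2))
           (min ((1 - a) * G.w u v) ((G.w u v + G.vdist u v) / 2))) := by
  have hB := G.vdist_nonneg u v
  have hC := G.vdist_nonneg v u
  have hred1 : ∀ b : ℝ, 0 ≤ b → b ≤ a → G.pdist u v a u v b =
      min ((a - b) * G.w u v) ((1 - a) * G.w u v + G.vdist v u + b * G.w u v) := by
    intro b h0 h1
    have hb : b ∈ Icc (0:ℝ) 1 := ⟨h0, le_trans h1 ha.2⟩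
    rw [G.pdist_self_eq u v hw.le ha hb, abs_of_nonneg (by linarith : (0:ℝ) ≤ a - b)]
    apply min_absorb3
    have e : a * G.w u v + G.vdist u v + (1 - b) * G.w u v - (a - b) * G.w u v
        = G.vdist u v + G.w u v := by ring
    linarith
  have hred2 : ∀ b : ℝ, a ≤ b → b ≤ 1 → G.pdist u v a u v b =
      min ((b - a) * G.w u v) (a * G.w u v + G.vdist u v + (1 - b) * G.w u v) := by
    intro b h0 h1
    have hb : b ∈ Icc (0:ℝ) 1 := ⟨le_trans ha.1 h0, h1⟩
    rw [G.pdist_self_eq u v hw.le ha hb, abs_sub_comm, abs_of_nonneg (by linarith : (0:ℝ) ≤ b - a),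
      min_comm (a * G.w u v + G.vdist u v + (1 - b) * G.w u v) _]
    apply min_absorb3
    have e : (1 - a) * G.w u v + G.vdist v u + b * G.w u v - (b - a) * G.w u v
        = G.vdist v u + G.w u v := by ring
    linarith
  have hset : {x | ∃ b ∈ Icc (0:ℝ) 1, x = G.pdist u v a u v b} =
      {x | ∃ b ∈ Icc (0:ℝ) a, x = min ((a - b) * G.w u v)
          ((1 - a) * G.w u v + G.vdist v u + b * G.w u v)} ∪
      {x | ∃ b ∈ Icc a (1:ℝ), x = min ((b - a) * G.w u v)
          (a * G.w u v + G.vdist u v + (1 - b) * G.w u v)} := by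
    ext x
    constructor
    · rintro ⟨b, hb, rfl⟩
      rcases le_total b a with hba | hab
      · exact Or.inl ⟨b, ⟨hb.1, hba⟩, (hred1 b hb.1 hba).symm ▸ rfl⟩
      · exact Or.inr ⟨b, ⟨hab, hb.2⟩, (hred2 b hab hb.2).symm ▸ rfl⟩
    · rintro (⟨b, hb, rfl⟩ | ⟨b, hb, rfl⟩)
      · exact ⟨b, ⟨hb.1, le_trans hb.2 ha.2⟩, (hred1 b hb.1 hb.2).symm⟩
      · exact ⟨b, ⟨le_trans ha.1 hb.1, hb.2⟩, (hred2 b hb.1 hb.2).symm⟩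
  rw [hset]
  have g1 := supself_half hw hC ha.1
  have g2' := supself_half hw hB (show (0:ℝ) ≤ 1 - a by linarith [ha.2])
  have hS2 : {x | ∃ b ∈ Icc a (1:ℝ), x = min ((b - a) * G.w u v)
      (a * G.w u v + G.vdist u v + (1 - b) * G.w u v)} =
      {x | ∃ b ∈ Icc (0:ℝ) (1 - a), x = min ((1 - a - b) * G.w u v)
      ((1 - (1 - a)) * G.w u v + G.vdist u v + b * G.w u v)} := by
    ext x
    constructor
    · rintro ⟨b, ⟨h0, h1⟩, rfl⟩
      refine ⟨1 - b, ⟨by linarith, by linarith⟩, ?_⟩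
      congr 1
      · ring
      · ring
    · rintro ⟨b, ⟨h0, h1⟩, rfl⟩
      refine ⟨1 - b, ⟨by linarith, by linarith⟩, ?_⟩
      congr 1
      · ring
      · ring
  rw [hS2]
  exact g1.union g2'

lemma WGraph.pdist_swap (G : WGraph n) (u v s t : Fin n) (huv : u ≠ v) (a b : ℝ) :
    G.pdist u v a t s b = G.pdist u v a s t (1 - b) := by
  have hbase : ∀ x1 x2 x3 x4 : ℝ, min (min x2 x1) (min x4 x3) = min (min x1 x2) (min x3 x4) := by
    intro x1 x2 x3 x4; rw [min_comm x2 x1, min_comm x4 x3]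
  by_cases h1 : u = s ∧ v = t
  · have hneg : ¬(u = t ∧ v = s) := fun h => huv (h.1.trans h1.2.symm)
    unfold WGraph.pdist
    simp only [show (1:ℝ) - (1 - b) = b by ring, G.wsymm t s, if_pos h1, if_neg hneg]
    congr 1
    exact hbase _ _ _ _
  · by_cases h2 : u = t ∧ v = s
    · have hneg : ¬(u = s ∧ v = t) := fun h => huv (h.1.trans h2.2.symm)
      unfold WGraph.pdist
      simp only [show (1:ℝ) - (1 - b) = b by ring, G.wsymm t s, if_pos h2, if_neg hneg]
      congr 1
      exact hbase _ _ _ _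
    · unfold WGraph.pdist
      simp only [show (1:ℝ) - (1 - b) = b by ring, G.wsymm t s, if_neg h1, if_neg h2]
      exact hbase _ _ _ _

lemma WGraph.pdist_cont_b (G : WGraph n) (u v s t : Fin n) (a : ℝ) :
    Continuous (fun b => G.pdist u v a s t b) := by
  unfold WGraph.pdist
  simp only []
  split_ifs <;> fun_prop

lemma WGraph.eccSet_good (G : WGraph n) (u v : Fin n) (huv : G.adj u v = true) (a : ℝ) :
    IsCompact {x | ∃ s t, G.adj s t = true ∧ ∃ b ∈ Icc (0:ℝ) 1, x = G.pdist u v a s t b} ∧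
    {x | ∃ s t, G.adj s t = true ∧ ∃ b ∈ Icc (0:ℝ) 1, x = G.pdist u v a s t b}.Nonempty := by
  constructor
  · have heq : {x | ∃ s t, G.adj s t = true ∧ ∃ b ∈ Icc (0:ℝ) 1, x = G.pdist u v a s t b} =
        ⋃ st : Fin n × Fin n, (if G.adj st.1 st.2 = true then
          (fun b => G.pdist u v a st.1 st.2 b) '' Icc 0 1 else ∅) := by
      ext x
      simp only [mem_iUnion, mem_setOf_eq]
      constructor
      · rintro ⟨s, t, hadj, b, hb, rfl⟩
        exact ⟨(s, t), by rw [if_pos hadj]; exact ⟨b, hb, rfl⟩⟩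
      · rintro ⟨⟨s, t⟩, hx⟩
        by_cases h : G.adj s t = true
        · rw [if_pos h] at hx
          obtain ⟨b, hb, rfl⟩ := hx
          exact ⟨s, t, h, b, hb, rfl⟩
        · rw [if_neg h] at hx
          exact absurd hx (notMem_empty x)
    rw [heq]
    apply isCompact_iUnion
    intro st
    split_ifs
    · exact isCompact_Icc.image (G.pdist_cont_b u v st.1 st.2 a)
    · exact isCompact_empty
  · exact ⟨G.pdist u v a u v 0, u, v, huv, 0, ⟨le_refl 0, zero_le_one⟩, rfl⟩

lemma WGraph.pdist_lip (G : WGraph n) (u v s t : Fin n) (hw : 0 ≤ G.w u v) (b a a' : ℝ) :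
    |G.pdist u v a s t b - G.pdist u v a' s t b| ≤ G.w u v * |a - a'| := by
  have key : ∀ x y x' y' : ℝ, |x - x'| ≤ G.w u v * |a - a'| → |y - y'| ≤ G.w u v * |a - a'| →
      |min x y - min x' y'| ≤ G.w u v * |a - a'| :=
    fun x y x' y' h1 h2 => le_trans (abs_min_sub_min_le_max _ _ _ _) (max_le h1 h2)
  have h1 : ∀ c1 c2 : ℝ, |(a * G.w u v + c1 + c2) - (a' * G.w u v + c1 + c2)|
      ≤ G.w u v * |a - a'| := by
    intro c1 c2
    rw [show a * G.w u v + c1 + c2 - (a' * G.w u v + c1 + c2) = (a - a') * G.w u v by ring,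
      abs_mul, abs_of_nonneg hw, mul_comm]
  have h2 : ∀ c1 c2 : ℝ, |((1 - a) * G.w u v + c1 + c2) - ((1 - a') * G.w u v + c1 + c2)|
      ≤ G.w u v * |a - a'| := by
    intro c1 c2
    rw [show (1 - a) * G.w u v + c1 + c2 - ((1 - a') * G.w u v + c1 + c2)
        = (a' - a) * G.w u v by ring, abs_mul, abs_of_nonneg hw, mul_comm, abs_sub_comm a' a]
  have h3 : ∀ c : ℝ, abs (|a - c| * G.w u v - |a' - c| * G.w u v) ≤ G.w u v * |a - a'| := by
    intro c
    have hh := abs_abs_sub_abs_le_abs_sub (a - c) (a' - c)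
    rw [show a - c - (a' - c) = a - a' by ring] at hh
    rw [show |a - c| * G.w u v - |a' - c| * G.w u v
        = (|a - c| - |a' - c|) * G.w u v by ring, abs_mul, abs_of_nonneg hw, mul_comm]
    exact mul_le_mul_of_nonneg_left hh hw
  unfold WGraph.pdist
  simp only []
  split_ifs
  · exact key _ _ _ _ (h3 b) (key _ _ _ _ (key _ _ _ _ (h1 _ _) (h1 _ _))
      (key _ _ _ _ (h2 _ _) (h2 _ _)))
  · exact key _ _ _ _ (h3 (1 - b)) (key _ _ _ _ (key _ _ _ _ (h1 _ _) (h1 _ _))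
      (key _ _ _ _ (h2 _ _) (h2 _ _)))
  · exact key _ _ _ _ (key _ _ _ _ (h1 _ _) (h1 _ _)) (key _ _ _ _ (h2 _ _) (h2 _ _))

lemma WGraph.ecc_lip (G : WGraph n) (u v : Fin n) (huv : G.adj u v = true) (a a' : ℝ) :
    |G.eccOn u v a - G.eccOn u v a'| ≤ G.w u v * |a - a'| := by
  have hw := (G.wpos u v huv).le
  have oneside : ∀ x y : ℝ, G.eccOn u v x ≤ G.eccOn u v y + G.w u v * |x - y| := by
    intro x y
    obtain ⟨hcx, hnx⟩ := G.eccSet_good u v huv x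
    obtain ⟨hcy, hny⟩ := G.eccSet_good u v huv y
    unfold WGraph.eccOn
    apply csSup_le hnx
    rintro z ⟨s, t, hadj, b, hb, rfl⟩
    have l1 := (abs_le.mp (G.pdist_lip u v s t hw b x y)).2
    have l2 : G.pdist u v y s t b ≤
        sSup {x | ∃ s t, G.adj s t = true ∧ ∃ b ∈ Icc (0:ℝ) 1, x = G.pdist u v y s t b} :=
      le_csSup hcy.bddAbove ⟨s, t, hadj, b, hb, rfl⟩
    linarith
  have o1 := oneside a a'
  have o2 := oneside a' a
  rw [abs_sub_comm a' a] at o2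
  rw [abs_le]
  constructor <;> linarith

noncomputable def WGraph.pcF (G : WGraph n) (u s t : Fin n) : ℝ :=
  min ((G.vdist u s + G.vdist u t + G.w s t) / 2)
    (min (G.vdist u s + G.w s t) (G.vdist u t + G.w s t))

noncomputable def WGraph.qcF (G : WGraph n) (u v s t : Fin n) : ℝ :=
  G.w u v + min ((G.vdist v s + G.vdist v t + G.w s t) / 2)
    (min (G.vdist v s + G.w s t) (G.vdist v t + G.w s t))

noncomputable def WGraph.cc1F (G : WGraph n) (u v s t : Fin n) : ℝ :=
  (G.vdist u s + G.vdist v t + G.w s t + G.w u v) / 2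

noncomputable def WGraph.cc2F (G : WGraph n) (u v s t : Fin n) : ℝ :=
  (G.vdist v s + G.vdist u t + G.w s t + G.w u v) / 2

lemma WGraph.pcF_swap (G : WGraph n) (u s t : Fin n) : G.pcF u t s = G.pcF u s t := by
  unfold WGraph.pcF
  rw [G.wsymm t s, min_comm (G.vdist u t + G.w s t) (G.vdist u s + G.w s t),
    show G.vdist u t + G.vdist u s + G.w s t = G.vdist u s + G.vdist u t + G.w s t by ring]

lemma WGraph.qcF_swap (G : WGraph n) (u v s t : Fin n) : G.qcF u v t s = G.qcF u v s t := by
  unfold WGraph.qcF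
  rw [G.wsymm t s, min_comm (G.vdist v t + G.w s t) (G.vdist v s + G.w s t),
    show G.vdist v t + G.vdist v s + G.w s t = G.vdist v s + G.vdist v t + G.w s t by ring]

lemma WGraph.ccF_swap (G : WGraph n) (u v s t : Fin n) : G.cc1F u v t s = G.cc2F u v s t := by
  unfold WGraph.cc1F WGraph.cc2F
  rw [G.wsymm t s]
  ring

lemma WGraph.trap_cases' (G : WGraph n) (u v s t : Fin n) (a M : ℝ)
    (hM : M = min (min ((min (a * G.w u v + G.vdist u s) ((1 - a) * G.w u v + G.vdist v s)
          + min (a * G.w u v + G.vdist u t) ((1 - a) * G.w u v + G.vdist v t) + G.w s t) / 2)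
        (min (a * G.w u v + G.vdist u s) ((1 - a) * G.w u v + G.vdist v s) + G.w s t))
      (min (a * G.w u v + G.vdist u t) ((1 - a) * G.w u v + G.vdist v t) + G.w s t)) :
    M = G.w u v * a + G.pcF u s t ∨ M = G.cc1F u v s t ∨ M = G.cc2F u v s t ∨
      M = -(G.w u v * a) + G.qcF u v s t := by
  have := trap_cases (G.w u v) (G.vdist u s) (G.vdist u t) (G.vdist v s) (G.vdist v t)
    (G.w s t) a M hM
  unfold WGraph.pcF WGraph.qcF WGraph.cc1F WGraph.cc2F
  exact this

lemma WGraph.pdistSet_swap (G : WGraph n) (u v s t : Fin n) (huv : u ≠ v) (a : ℝ) :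
    {x | ∃ b ∈ Icc (0:ℝ) 1, x = G.pdist u v a t s b} =
    {x | ∃ b ∈ Icc (0:ℝ) 1, x = G.pdist u v a s t b} := by
  ext x
  constructor
  · rintro ⟨b, ⟨h0, h1⟩, rfl⟩
    exact ⟨1 - b, ⟨by linarith, by linarith⟩, G.pdist_swap u v s t huv a b⟩
  · rintro ⟨b, ⟨h0, h1⟩, rfl⟩
    refine ⟨1 - b, ⟨by linarith, by linarith⟩, ?_⟩
    rw [G.pdist_swap u v s t huv a (1 - b), show (1:ℝ) - (1 - b) = b by ring]

lemma envelope_pwa {w : ℝ} (hw : 0 < w) (E : ℝ → ℝ) (R D : List ℝ) (F : Set ℝ) (hF : F.Finite)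
    (hcont : ContinuousOn E (Icc 0 1))
    (hLip : ∀ a ∈ Icc (0:ℝ) 1, ∀ b ∈ Icc (0:ℝ) 1, |E a - E b| ≤ w * |a - b|)
    (hmem : ∀ a ∈ Icc (0:ℝ) 1,
      (∃ p ∈ R, E a = w * a + p) ∨ (∃ q ∈ D, E a = -(w * a) + q) ∨ E a ∈ F) :
    PWAffine E (2 * (R.length + D.length) + 1) := by
  classical
  set N : ℕ := 2 * (R.length + D.length) + 1 with hN
  -- the level sets
  set IR : ℝ → Set ℝ := fun p => {x | x ∈ Icc (0:ℝ) 1 ∧ E x = w * x + p} with hIR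
  set ID : ℝ → Set ℝ := fun q => {x | x ∈ Icc (0:ℝ) 1 ∧ E x = -(w * x) + q} with hID
  have hsub : ∀ p, IR p ⊆ Icc 0 1 := fun p x hx => hx.1
  have hsubD : ∀ q, ID q ⊆ Icc 0 1 := fun q x hx => hx.1
  have hbdd : ∀ s : Set ℝ, s ⊆ Icc 0 1 → BddBelow s ∧ BddAbove s := by
    intro s hs
    exact ⟨⟨0, fun x hx => (hs hx).1⟩, ⟨1, fun x hx => (hs hx).2⟩⟩
  -- closedness
  have hclR : ∀ p, IsClosed (IR p) := by
    intro p
    have : IR p = Icc 0 1 ∩ (fun x => E x - (w * x + p)) ⁻¹' {0} := by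
      ext x; simp only [hIR, mem_setOf_eq, mem_inter_iff, mem_preimage, mem_singleton_iff]
      constructor
      · rintro ⟨h1, h2⟩; exact ⟨h1, by rw [h2]; ring⟩
      · rintro ⟨h1, h2⟩; exact ⟨h1, by linarith [h2]⟩
    rw [this]
    exact ContinuousOn.preimage_isClosed_of_isClosed
      (hcont.sub ((continuous_const.mul continuous_id).add continuous_const).continuousOn)
      isClosed_Icc isClosed_singleton
  have hclD : ∀ q, IsClosed (ID q) := by
    intro q
    have : ID q = Icc 0 1 ∩ (fun x => E x - (-(w * x) + q)) ⁻¹' {0} := by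
      ext x; simp only [hID, mem_setOf_eq, mem_inter_iff, mem_preimage, mem_singleton_iff]
      constructor
      · rintro ⟨h1, h2⟩; exact ⟨h1, by rw [h2]; ring⟩
      · rintro ⟨h1, h2⟩; exact ⟨h1, by linarith [h2]⟩
    rw [this]
    exact ContinuousOn.preimage_isClosed_of_isClosed
      (hcont.sub (((continuous_const.mul continuous_id).neg).add continuous_const).continuousOn)
      isClosed_Icc isClosed_singleton
  -- endpoints
  set eI : Set ℝ → ℝ := fun s => if s.Nonempty then sInf s else 0 with heI
  set eS : Set ℝ → ℝ := fun s => if s.Nonempty then sSup s else 0 with heS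
  set pts : List ℝ := 0 :: 1 :: (R.map (fun p => eI (IR p)) ++ R.map (fun p => eS (IR p))
      ++ D.map (fun q => eI (ID q)) ++ D.map (fun q => eS (ID q))) with hpts
  have hptslen : pts.length = N + 1 := by
    simp only [hpts, List.length_cons, List.length_append, List.length_map, hN]; ring
  have hmem01 : ∀ x ∈ pts, x ∈ Icc (0:ℝ) 1 := by
    intro x hx
    have hgen : ∀ (s : Set ℝ), s ⊆ Icc 0 1 → IsClosed s → eI s ∈ Icc (0:ℝ) 1 ∧ eS s ∈ Icc (0:ℝ) 1 := by
      intro s hs hcl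
      by_cases h : s.Nonempty
      · have h1 := hcl.csInf_mem h (hbdd s hs).1
        have h2 := hcl.csSup_mem h (hbdd s hs).2
        simp only [heI, heS, if_pos h]
        exact ⟨hs h1, hs h2⟩
      · simp only [heI, heS, if_neg h]
        exact ⟨⟨le_refl 0, zero_le_one⟩, ⟨le_refl 0, zero_le_one⟩⟩
    simp only [hpts, List.mem_cons, List.mem_append, List.mem_map] at hx
    rcases hx with rfl | rfl | (((⟨p, hp, rfl⟩ | ⟨p, hp, rfl⟩) | ⟨q, hq, rfl⟩) | ⟨q, hq, rfl⟩)
    · exact ⟨le_refl 0, zero_le_one⟩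
    · exact ⟨zero_le_one, le_refl 1⟩
    · exact (hgen _ (hsub p) (hclR p)).1
    · exact (hgen _ (hsub p) (hclR p)).2
    · exact (hgen _ (hsubD q) (hclD q)).1
    · exact (hgen _ (hsubD q) (hclD q)).2
  -- sorted breakpoints
  set sorted : List ℝ := Multiset.sort (↑pts) (· ≤ ·) with hsorted
  have hslen : sorted.length = N + 1 := by
    rw [hsorted, Multiset.length_sort, Multiset.coe_card, hptslen]
  have hssorted : List.SortedLE sorted := (Multiset.pairwise_sort _ _).sortedLE
  have hsmem : ∀ x, x ∈ sorted ↔ x ∈ pts := by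
    intro x; rw [hsorted, Multiset.mem_sort, Multiset.mem_coe]
  set t : Fin (N + 1) → ℝ := fun i => sorted.get ⟨i.val, by rw [hslen]; exact i.isLt⟩ with ht
  have hmono : Monotone t := by
    intro i j hij
    exact hssorted (show (⟨i.val, _⟩ : Fin sorted.length) ≤ ⟨j.val, _⟩ from hij)
  have htmem : ∀ i, t i ∈ pts := by
    intro i; rw [← hsmem]; exact List.get_mem _ _
  have hidx : ∀ x ∈ pts, ∃ j : Fin (N + 1), t j = x := by
    intro x hx
    rw [← hsmem] at hx
    obtain ⟨j, hj⟩ := List.mem_iff_get.mp hx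
    exact ⟨⟨j.val, by rw [← hslen]; exact j.isLt⟩, hj⟩
  refine ⟨t, hmono, ?_, ?_, ?_⟩
  · -- t 0 = 0
    obtain ⟨j, hj⟩ := hidx 0 (by simp [hpts])
    have h1 : t 0 ≤ t j := hmono (Fin.zero_le j)
    have h2 : (0:ℝ) ≤ t 0 := (hmem01 _ (htmem 0)).1
    rw [hj] at h1; linarith
  · -- t last = 1
    obtain ⟨j, hj⟩ := hidx 1 (by simp [hpts])
    have h1 : t j ≤ t (Fin.last N) := hmono (Fin.le_last j)
    have h2 : t (Fin.last N) ≤ 1 := (hmem01 _ (htmem _)).2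
    rw [hj] at h1; linarith
  · -- pieces
    intro i
    set x₁ : ℝ := t i.castSucc with hx₁
    set x₂ : ℝ := t i.succ with hx₂
    have hx12 : x₁ ≤ x₂ := hmono (Fin.castSucc_le_succ i)
    have hIcc01 : Icc x₁ x₂ ⊆ Icc 0 1 :=
      Icc_subset_Icc (hmem01 _ (htmem _)).1 (hmem01 _ (htmem _)).2
    -- no breakpoint strictly inside
    have hnoin : ∀ m ∈ pts, ¬(x₁ < m ∧ m < x₂) := by
      rintro m hm ⟨h1, h2⟩
      obtain ⟨j, hj⟩ := hidx m hm
      rcases le_or_gt j i.castSucc with h | h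
      · have := hmono h; rw [hj] at this; linarith
      · have hj2 : i.succ ≤ j := by
          rw [Fin.le_def]; rw [Fin.lt_def] at h
          simp only [Fin.coe_castSucc, Fin.val_succ] at h ⊢; omega
        have := hmono hj2; rw [hj] at this; linarith
    -- interval containment machinery, for a closed set whose inf/sup are breakpoints
    have hkey : ∀ (s : Set ℝ), s ⊆ Icc 0 1 → IsClosed s → eI s ∈ pts → eS s ∈ pts →
        (∀ y z, y ∈ s → z ∈ s → ∀ x, y ≤ x → x ≤ z → x ∈ s) →
        (∃ a₀ ∈ s, x₁ < a₀ ∧ a₀ < x₂) → Icc x₁ x₂ ⊆ s := by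
      intro s hs hcl hip hsp hconv ⟨a₀, ha₀, hlt1, hlt2⟩
      have hne : s.Nonempty := ⟨a₀, ha₀⟩
      have hInf := hcl.csInf_mem hne (hbdd s hs).1
      have hSup := hcl.csSup_mem hne (hbdd s hs).2
      have heIs : eI s = sInf s := by simp [heI, if_pos hne]
      have heSs : eS s = sSup s := by simp [heS, if_pos hne]
      have h1 : sInf s ≤ x₁ := by
        have hle : sInf s ≤ a₀ := csInf_le (hbdd s hs).1 ha₀
        have := hnoin (sInf s) (heIs ▸ hip)
        by_contra hcon; push_neg at hcon
        exact this ⟨hcon, lt_of_le_of_lt hle hlt2⟩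
      have h2 : x₂ ≤ sSup s := by
        have hle : a₀ ≤ sSup s := le_csSup (hbdd s hs).2 ha₀
        have := hnoin (sSup s) (heSs ▸ hsp)
        by_contra hcon; push_neg at hcon
        exact this ⟨lt_of_lt_of_le hlt1 hle, hcon⟩
      intro x hx
      exact hconv _ _ hInf hSup x (le_trans h1 hx.1) (le_trans hx.2 h2)
    by_cases hA : ∃ p ∈ R, ∃ a₀ ∈ IR p, x₁ < a₀ ∧ a₀ < x₂
    · obtain ⟨p, hp, ha₀⟩ := hA
      have hconv : ∀ y z, y ∈ IR p → z ∈ IR p → ∀ x, y ≤ x → x ≤ z → x ∈ IR p := by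
        intro y z hy hz x hyx hxz
        have hx01 : x ∈ Icc (0:ℝ) 1 := ⟨le_trans hy.1.1 hyx, le_trans hxz hz.1.2⟩
        refine ⟨hx01, ?_⟩
        have l1 := hLip x hx01 y hy.1
        have l2 := hLip z hz.1 x hx01
        rw [abs_sub_comm] at l2
        rw [abs_le] at l1 l2
        rw [abs_of_nonneg (by linarith : (0:ℝ) ≤ x - y)] at l1
        rw [abs_of_nonneg (by linarith : (0:ℝ) ≤ z - x)] at l2
        have ey := hy.2; have ez := hz.2
        nlinarith [l1.1, l1.2, l2.1, l2.2]
      have hip : eI (IR p) ∈ pts :=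
        List.mem_cons_of_mem _ (List.mem_cons_of_mem _ (List.mem_append_left _
          (List.mem_append_left _ (List.mem_append_left _ (List.mem_map_of_mem hp)))))
      have hsp : eS (IR p) ∈ pts :=
        List.mem_cons_of_mem _ (List.mem_cons_of_mem _ (List.mem_append_left _
          (List.mem_append_left _ (List.mem_append_right _ (List.mem_map_of_mem hp)))))
      have := hkey (IR p) (hsub p) (hclR p) hip hsp hconv ha₀
      exact ⟨w, p, fun x hx => (this hx).2⟩
    by_cases hB : ∃ q ∈ D, ∃ a₀ ∈ ID q, x₁ < a₀ ∧ a₀ < x₂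
    · obtain ⟨q, hq, ha₀⟩ := hB
      have hconv : ∀ y z, y ∈ ID q → z ∈ ID q → ∀ x, y ≤ x → x ≤ z → x ∈ ID q := by
        intro y z hy hz x hyx hxz
        have hx01 : x ∈ Icc (0:ℝ) 1 := ⟨le_trans hy.1.1 hyx, le_trans hxz hz.1.2⟩
        refine ⟨hx01, ?_⟩
        have l1 := hLip x hx01 y hy.1
        have l2 := hLip z hz.1 x hx01
        rw [abs_sub_comm] at l2
        rw [abs_le] at l1 l2
        rw [abs_of_nonneg (by linarith : (0:ℝ) ≤ x - y)] at l1
        rw [abs_of_nonneg (by linarith : (0:ℝ) ≤ z - x)] at l2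
        have ey := hy.2; have ez := hz.2
        nlinarith [l1.1, l1.2, l2.1, l2.2]
      have hip : eI (ID q) ∈ pts :=
        List.mem_cons_of_mem _ (List.mem_cons_of_mem _ (List.mem_append_left _
          (List.mem_append_right _ (List.mem_map_of_mem hq))))
      have hsp : eS (ID q) ∈ pts :=
        List.mem_cons_of_mem _ (List.mem_cons_of_mem _
          (List.mem_append_right _ (List.mem_map_of_mem hq)))
      have := hkey (ID q) (hsubD q) (hclD q) hip hsp hconv ha₀
      refine ⟨-w, q, fun x hx => ?_⟩
      have := (this hx).2; rw [this]; ring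
    · -- constant case
      push_neg at hA hB
      have himg : E '' Icc x₁ x₂ ⊆ F ∪ {E x₁, E x₂} := by
        rintro y ⟨x, hx, rfl⟩
        rcases eq_or_lt_of_le hx.1 with h1 | h1
        · right; rw [← h1]; exact mem_insert _ _
        rcases eq_or_lt_of_le hx.2 with h2 | h2
        · right; rw [h2]; exact mem_insert_iff.mpr (Or.inr rfl)
        have hx01 := hIcc01 hx
        rcases hmem x hx01 with ⟨p, hp, hE⟩ | ⟨q, hq, hE⟩ | hE
        · exact absurd (hA p hp x ⟨hx01, hE⟩ h1) (not_le.mpr h2)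
        · exact absurd (hB q hq x ⟨hx01, hE⟩ h1) (not_le.mpr h2)
        · exact Or.inl hE
      have hfin : (E '' Icc x₁ x₂).Finite :=
        (hF.union ((finite_singleton _).insert _)).subset himg
      have hpc : IsPreconnected (E '' Icc x₁ x₂) :=
        (isPreconnected_Icc).image E (hcont.mono hIcc01)
      have hss : (E '' Icc x₁ x₂).Subsingleton := by
        intro a ha b hb
        by_contra hne
        rcases lt_or_gt_of_ne hne with h | h
        · have hsub2 : Icc a b ⊆ E '' Icc x₁ x₂ := hpc.ordConnected.out ha hb
          exact (hfin.subset hsub2).not_infinite (Set.infinite_coe_iff.mp (Set.Icc.infinite h))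
        · have hsub2 : Icc b a ⊆ E '' Icc x₁ x₂ := hpc.ordConnected.out hb ha
          exact (hfin.subset hsub2).not_infinite (Set.infinite_coe_iff.mp (Set.Icc.infinite h))
      refine ⟨0, E x₁, fun x hx => ?_⟩
      have h1 : E x ∈ E '' Icc x₁ x₂ := mem_image_of_mem E hx
      have h2 : E x₁ ∈ E '' Icc x₁ x₂ := mem_image_of_mem E ⟨le_refl _, hx12⟩
      rw [hss h1 h2]; ring

/-- Lemma 5: on an edge `uv`, the eccentricity function is continuous and piecewise
linear; if `k` is the number of edges of `G` containing a farthest point of some point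
of `uv`, then it consists of at most `4k+1` linear segments. -/
theorem eccentricity_on_edge_piecewise_linear (n : ℕ) (G : WGraph n)
    (hconn : G.toSimple.Connected) (u v : Fin n) (huv : G.adj u v = true) (k : ℕ)
    (hk : {e : Sym2 (Fin n) | ∃ s t : Fin n, e = s(s, t) ∧ G.adj s t = true ∧
        ∃ lam ∈ Icc (0:ℝ) 1, ∃ mu ∈ Icc (0:ℝ) 1,
          G.pdist u v lam s t mu = G.eccOn u v lam}.ncard = k) :
    ContinuousOn (fun a => G.eccOn u v a) (Icc 0 1) ∧
    PWAffine (fun a => G.eccOn u v a) (4 * k + 1) := by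
  classical
  have hw : 0 < G.w u v := G.wpos u v huv
  have huvne : u ≠ v := by
    intro h
    subst h
    rw [G.loopless u] at huv
    exact Bool.false_ne_true huv
  have hLip : ∀ x ∈ Icc (0:ℝ) 1, ∀ y ∈ Icc (0:ℝ) 1,
      |G.eccOn u v x - G.eccOn u v y| ≤ G.w u v * |x - y| :=
    fun x _ y _ => G.ecc_lip u v huv x y
  have hcont : ContinuousOn (fun a => G.eccOn u v a) (Icc 0 1) := by
    apply LipschitzOnWith.continuousOn (K := ⟨G.w u v, hw.le⟩)
    apply LipschitzOnWith.of_dist_le_mul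
    intro x hx y hy
    rw [Real.dist_eq, Real.dist_eq]
    exact hLip x hx y hy
  set S := {e : Sym2 (Fin n) | ∃ s t : Fin n, e = s(s, t) ∧ G.adj s t = true ∧
      ∃ lam ∈ Icc (0:ℝ) 1, ∃ mu ∈ Icc (0:ℝ) 1,
        G.pdist u v lam s t mu = G.eccOn u v lam} with hSdef
  have hSfin : S.Finite := Set.toFinite S
  set L := hSfin.toFinset.toList with hLdef
  have hLlen : L.length = k := by
    rw [hLdef, Finset.length_toList, ← Set.ncard_eq_toFinset_card S hSfin, hk]
  have hmemL : ∀ e ∈ S, e ∈ L := by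
    intro e he
    rw [hLdef, Finset.mem_toList, Set.Finite.mem_toFinset]
    exact he
  have hex : ∀ e : Sym2 (Fin n), ∃ p : Fin n × Fin n, s(p.1, p.2) = e := fun e =>
    Sym2.ind (fun x y => ⟨(x, y), rfl⟩) e
  set rep : Sym2 (Fin n) → Fin n × Fin n := fun e => (hex e).choose with hrepdef
  have hrep : ∀ e, s((rep e).1, (rep e).2) = e := fun e => (hex e).choose_spec
  set Rl : List ℝ := L.map (fun e => if e = s(u, v) then 0
      else G.pcF u (rep e).1 (rep e).2) with hRldef
  set Dl : List ℝ := L.map (fun e => if e = s(u, v) then G.w u v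
      else G.qcF u v (rep e).1 (rep e).2) with hDldef
  set Fs : Set ℝ := ((fun e => G.cc1F u v (rep e).1 (rep e).2) '' S) ∪
      ((fun e => G.cc2F u v (rep e).1 (rep e).2) '' S) ∪
      {(G.w u v + G.vdist v u) / 2, (G.w u v + G.vdist u v) / 2} with hFsdef
  have hFsfin : Fs.Finite :=
    ((hSfin.image _).union (hSfin.image _)).union ((finite_singleton _).insert _)
  have hmain : ∀ a ∈ Icc (0:ℝ) 1,
      (∃ p ∈ Rl, G.eccOn u v a = G.w u v * a + p) ∨
      (∃ q ∈ Dl, G.eccOn u v a = -(G.w u v * a) + q) ∨ G.eccOn u v a ∈ Fs := by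
    intro a ha
    obtain ⟨hcomp, hne⟩ := G.eccSet_good u v huv a
    have hbddA := hcomp.bddAbove
    have hEdef : G.eccOn u v a = sSup {x | ∃ s t, G.adj s t = true ∧
        ∃ b ∈ Icc (0:ℝ) 1, x = G.pdist u v a s t b} := rfl
    have hEmem : G.eccOn u v a ∈ {x | ∃ s t, G.adj s t = true ∧
        ∃ b ∈ Icc (0:ℝ) 1, x = G.pdist u v a s t b} := by
      rw [hEdef]
      exact hcomp.sSup_mem hne
    obtain ⟨s, t, hadj, b, hb, hEx⟩ := hEmem
    have heS : s(s, t) ∈ S := ⟨s, t, rfl, hadj, a, ha, b, hb, hEx.symm⟩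
    have key : ∀ M : ℝ, IsGreatest {x | ∃ b ∈ Icc (0:ℝ) 1, x = G.pdist u v a s t b} M →
        G.eccOn u v a = M := by
      intro M hM
      apply le_antisymm
      · rw [hEx]
        exact hM.2 ⟨b, hb, rfl⟩
      · obtain ⟨b0, hb0, hMv⟩ := hM.1
        rw [hEdef]
        exact le_csSup hbddA ⟨s, t, hadj, b0, hb0, hMv⟩
    by_cases hself : s(s, t) = s(u, v)
    · rw [hself] at heS
      have hE : G.eccOn u v a = max (min (a * G.w u v) ((G.w u v + G.vdist v u) / 2))
          (min ((1 - a) * G.w u v) ((G.w u v + G.vdist u v) / 2)) := by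
        rcases Sym2.eq_iff.mp hself with ⟨hs, ht⟩ | ⟨hs, ht⟩
        · apply key
          rw [hs, ht]
          exact G.phi_self u v hw ha
        · apply key
          rw [hs, ht, G.pdistSet_swap u v u v huvne a]
          exact G.phi_self u v hw ha
      have hRmem : (0:ℝ) ∈ Rl := by
        rw [hRldef]
        exact List.mem_map.mpr ⟨s(u, v), hmemL _ heS, by rw [if_pos rfl]⟩
      have hDmem : G.w u v ∈ Dl := by
        rw [hDldef]
        exact List.mem_map.mpr ⟨s(u, v), hmemL _ heS, by rw [if_pos rfl]⟩
      rcases max_cases (min (a * G.w u v) ((G.w u v + G.vdist v u) / 2))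
          (min ((1 - a) * G.w u v) ((G.w u v + G.vdist u v) / 2)) with ⟨hmx, -⟩ | ⟨hmx, -⟩ <;>
        rw [hmx] at hE
      · rcases min_cases (a * G.w u v) ((G.w u v + G.vdist v u) / 2) with ⟨hmn, -⟩ | ⟨hmn, -⟩ <;>
          rw [hmn] at hE
        · exact Or.inl ⟨0, hRmem, by rw [hE]; ring⟩
        · refine Or.inr (Or.inr ?_)
          rw [hFsdef, hE]
          exact Or.inr (mem_insert _ _)
      · rcases min_cases ((1 - a) * G.w u v) ((G.w u v + G.vdist u v) / 2)
            with ⟨hmn, -⟩ | ⟨hmn, -⟩ <;> rw [hmn] at hE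
        · exact Or.inr (Or.inl ⟨G.w u v, hDmem, by rw [hE]; ring⟩)
        · refine Or.inr (Or.inr ?_)
          rw [hFsdef, hE]
          exact Or.inr (mem_insert_iff.mpr (Or.inr rfl))
    · have h1 : ¬(u = s ∧ v = t) := by
        rintro ⟨rfl, rfl⟩
        exact hself rfl
      have h2 : ¬(u = t ∧ v = s) := by
        rintro ⟨rfl, rfl⟩
        exact hself Sym2.eq_swap
      have hE := key _ (G.phi_ne u v s t hadj h1 h2 a)
      have hrepst := Sym2.eq_iff.mp (hrep s(s, t))
      rcases G.trap_cases' u v s t a _ hE with hc | hc | hc | hc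
      · refine Or.inl ⟨G.pcF u s t, ?_, hc⟩
        rw [hRldef]
        refine List.mem_map.mpr ⟨s(s, t), hmemL _ heS, ?_⟩
        rw [if_neg hself]
        rcases hrepst with ⟨e1, e2⟩ | ⟨e1, e2⟩
        · rw [e1, e2]
        · rw [e1, e2, G.pcF_swap u s t]
      · refine Or.inr (Or.inr ?_)
        rw [hFsdef]
        rcases hrepst with ⟨e1, e2⟩ | ⟨e1, e2⟩
        · refine Or.inl (Or.inl ⟨s(s, t), heS, ?_⟩)
          show G.cc1F u v (rep s(s, t)).1 (rep s(s, t)).2 = G.eccOn u v a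
          rw [e1, e2]
          exact hc.symm
        · refine Or.inl (Or.inr ⟨s(s, t), heS, ?_⟩)
          show G.cc2F u v (rep s(s, t)).1 (rep s(s, t)).2 = G.eccOn u v a
          rw [e1, e2, ← G.ccF_swap u v t s]
          exact hc.symm
      · refine Or.inr (Or.inr ?_)
        rw [hFsdef]
        rcases hrepst with ⟨e1, e2⟩ | ⟨e1, e2⟩
        · refine Or.inl (Or.inr ⟨s(s, t), heS, ?_⟩)
          show G.cc2F u v (rep s(s, t)).1 (rep s(s, t)).2 = G.eccOn u v a
          rw [e1, e2]
          exact hc.symm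
        · refine Or.inl (Or.inl ⟨s(s, t), heS, ?_⟩)
          show G.cc1F u v (rep s(s, t)).1 (rep s(s, t)).2 = G.eccOn u v a
          rw [e1, e2, G.ccF_swap u v s t]
          exact hc.symm
      · refine Or.inr (Or.inl ⟨G.qcF u v s t, ?_, hc⟩)
        rw [hDldef]
        refine List.mem_map.mpr ⟨s(s, t), hmemL _ heS, ?_⟩
        rw [if_neg hself]
        rcases hrepst with ⟨e1, e2⟩ | ⟨e1, e2⟩
        · rw [e1, e2]
        · rw [e1, e2, G.qcF_swap u v s t]
  have henv := envelope_pwa hw (fun a => G.eccOn u v a) Rl Dl Fs hFsfin hcont hLip hmain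
  have hlen : 2 * (Rl.length + Dl.length) + 1 = 4 * k + 1 := by
    rw [hRldef, hDldef, List.length_map, List.length_map, hLlen]
    ring
  rw [hlen] at henv
  exact ⟨hcont, henv⟩
end

section
/- The upper envelope of n piecewise-linear functions on [0,1], each consisting of at most one ascending segment of slope +s, at most one constant segment, and at most one descending segment of slope −s (for a common fixed s>0, in this order), has at most 4k+2 breakpoints, where k is the number of functions attaining the envelope at some point. -/
open Set

/-- Two affine functions agreeing at two distinct points are equal. -/
lemma affine_eq_of_two {a b p q x y : ℝ} (hxy : x ≠ y)
    (h1 : a * x + b = p * x + q) (h2 : a * y + b = p * y + q) : a = p ∧ b = q := by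
  have hx : (a - p) * (x - y) = 0 := by ring_nf; nlinarith [h1, h2]
  have hap : a = p := by
    rcases mul_eq_zero.1 hx with h | h
    · linarith
    · exact absurd (by linarith : x = y) hxy
  exact ⟨hap, by rw [hap] at h1; linarith⟩

/-- Helper for slope classification: if `a*x+b ≤ p*x+q` on `[x1,x2]` with equality at the
midpoint, then the two affine functions coincide. -/
lemma affine_touch_mid {a b p q x1 x2 : ℝ} (h12 : x1 < x2)
    (hle : ∀ x ∈ Icc x1 x2, a * x + b ≤ p * x + q)
    (heq : a * ((x1 + x2) / 2) + b = p * ((x1 + x2) / 2) + q) : a = p ∧ b = q := by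
  have e1 := hle x1 ⟨le_refl _, h12.le⟩
  have e2 := hle x2 ⟨h12.le, le_refl _⟩
  have z1 : a * x1 + b = p * x1 + q := by nlinarith
  have z2 : a * x2 + b = p * x2 + q := by nlinarith
  exact affine_eq_of_two h12.ne z1 z2

/-- Slope classification for a trapezoid: if it is affine on a non-degenerate interval,
the affine function is one of the three defining lines. -/
lemma trap_classify {s A B C a b x1 x2 : ℝ} (h12 : x1 < x2)
    (hmin : ∀ x ∈ Icc x1 x2, min (s * x + A) (min B (C - s * x)) = a * x + b) :
    (a = s ∧ b = A) ∨ (a = 0 ∧ b = B) ∨ (a = -s ∧ b = C) := by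
  set mp := (x1 + x2) / 2 with hmp
  have hmem : mp ∈ Icc x1 x2 := ⟨by rw [hmp]; linarith, by rw [hmp]; linarith⟩
  have hm := hmin mp hmem
  have hle1 : ∀ x ∈ Icc x1 x2, a * x + b ≤ s * x + A := fun x hx => by
    rw [← hmin x hx]; exact min_le_left _ _
  have hle2 : ∀ x ∈ Icc x1 x2, a * x + b ≤ 0 * x + B := fun x hx => by
    rw [← hmin x hx]; simpa using le_trans (min_le_right _ _) (min_le_left _ _)
  have hle3 : ∀ x ∈ Icc x1 x2, a * x + b ≤ (-s) * x + C := fun x hx => by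
    rw [← hmin x hx]
    have := le_trans (min_le_right (s * x + A) _) (min_le_right B (C - s * x))
    linarith
  rcases min_cases (s * mp + A) (min B (C - s * mp)) with ⟨h, _⟩ | ⟨h, _⟩
  · left
    exact affine_touch_mid h12 hle1 (by rw [← hm, h])
  · rcases min_cases B (C - s * mp) with ⟨h2, _⟩ | ⟨h2, _⟩
    · right; left
      have : a * mp + b = 0 * mp + B := by rw [← hm, h, h2]; ring
      exact affine_touch_mid h12 hle2 this
    · right; right
      have : a * mp + b = (-s) * mp + C := by rw [← hm, h, h2]; ring
      exact affine_touch_mid h12 hle3 this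

/-- If a trapezoid equals its ascending line at `x2`, it equals it to the left as well. -/
lemma trap_ray_left {s A B C x2 y : ℝ} (hs : 0 < s)
    (h : min (s * x2 + A) (min B (C - s * x2)) = s * x2 + A) (hy : y ≤ x2) :
    min (s * y + A) (min B (C - s * y)) = s * y + A := by
  have h1 : s * x2 + A ≤ min B (C - s * x2) := min_eq_left_iff.1 h
  have hB : s * x2 + A ≤ B := le_trans h1 (min_le_left _ _)
  have hC : s * x2 + A ≤ C - s * x2 := le_trans h1 (min_le_right _ _)
  have hsy : s * y ≤ s * x2 := by nlinarith
  apply min_eq_left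
  apply le_min <;> nlinarith

/-- If a trapezoid equals its descending line at `x1`, it equals it to the right as well. -/
lemma trap_ray_right {s A B C x1 y : ℝ} (hs : 0 < s)
    (h : min (s * x1 + A) (min B (C - s * x1)) = C - s * x1) (hy : x1 ≤ y) :
    min (s * y + A) (min B (C - s * y)) = C - s * y := by
  have hA : C - s * x1 ≤ s * x1 + A := by rw [← h]; exact min_le_left _ _
  have hB' : C - s * x1 ≤ B := by
    rw [← h]; exact le_trans (min_le_right _ _) (min_le_left _ _)
  have hsy : s * x1 ≤ s * y := by nlinarith
  have h2 : min B (C - s * y) = C - s * y := min_eq_right (by linarith)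
  rw [h2]
  exact min_eq_right (by linarith)

/-- Trapezoids are (two-sidedly) Lipschitz with constant `s`. -/
lemma trap_lip {s A B C x y : ℝ} (hs : 0 < s) (hxy : y ≤ x) :
    min (s * x + A) (min B (C - s * x)) ≤ min (s * y + A) (min B (C - s * y)) + s * (x - y) ∧
    min (s * y + A) (min B (C - s * y)) ≤ min (s * x + A) (min B (C - s * x)) + s * (x - y) := by
  have hsd : 0 ≤ s * (x - y) := by nlinarith
  constructor
  · rcases min_cases (s * y + A) (min B (C - s * y)) with ⟨he, _⟩ | ⟨he, _⟩
    · rw [he]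
      calc min (s * x + A) (min B (C - s * x)) ≤ s * x + A := min_le_left _ _
        _ = s * y + A + s * (x - y) := by ring
    · rw [he]
      rcases min_cases B (C - s * y) with ⟨he2, _⟩ | ⟨he2, _⟩
      · rw [he2]
        have : min (s * x + A) (min B (C - s * x)) ≤ B :=
          le_trans (min_le_right _ _) (min_le_left _ _)
        linarith
      · rw [he2]
        have : min (s * x + A) (min B (C - s * x)) ≤ C - s * x :=
          le_trans (min_le_right _ _) (min_le_right _ _)
        nlinarith
  · rcases min_cases (s * x + A) (min B (C - s * x)) with ⟨he, _⟩ | ⟨he, _⟩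
    · rw [he]
      have : min (s * y + A) (min B (C - s * y)) ≤ s * y + A := min_le_left _ _
      nlinarith
    · rw [he]
      rcases min_cases B (C - s * x) with ⟨he2, _⟩ | ⟨he2, _⟩
      · rw [he2]
        have : min (s * y + A) (min B (C - s * y)) ≤ B :=
          le_trans (min_le_right _ _) (min_le_left _ _)
        linarith
      · rw [he2]
        have : min (s * y + A) (min B (C - s * y)) ≤ C - s * y :=
          le_trans (min_le_right _ _) (min_le_right _ _)
        nlinarith

/-- Two affine functions with different slopes are comparable on any interval avoiding
their crossing point. -/
lemma affine_comparable {u v a b p q : ℝ} (ha : a ≠ p)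
    (hz : (q - b) / (a - p) ≤ u ∨ v ≤ (q - b) / (a - p)) :
    (∀ y ∈ Icc u v, a * y + b ≤ p * y + q) ∨ (∀ y ∈ Icc u v, p * y + q ≤ a * y + b) := by
  set z := (q - b) / (a - p) with hzdef
  have hap : a - p ≠ 0 := sub_ne_zero.2 ha
  have hzz : (a - p) * z = q - b := by
    rw [hzdef]; field_simp
  have key : ∀ y : ℝ, a * y + b - (p * y + q) = (a - p) * (y - z) := by
    intro y; rw [mul_sub, hzz]; ring
  rcases hz with hz | hz
  · rcases lt_or_gt_of_ne hap with h | h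
    · left; intro y ⟨hy1, _⟩
      have : (a - p) * (y - z) ≤ 0 := mul_nonpos_of_nonpos_of_nonneg h.le (by linarith)
      linarith [key y]
    · right; intro y ⟨hy1, _⟩
      have : 0 ≤ (a - p) * (y - z) := mul_nonneg h.le (by linarith)
      linarith [key y]
  · rcases lt_or_gt_of_ne hap with h | h
    · right; intro y ⟨_, hy2⟩
      have : 0 ≤ (a - p) * (y - z) := by nlinarith
      linarith [key y]
    · left; intro y ⟨_, hy2⟩
      have : (a - p) * (y - z) ≤ 0 := mul_nonpos_of_nonneg_of_nonpos h.le (by linarith)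
      linarith [key y]

/-- A finite nonempty set with a total transitive relation has a top element. -/
lemma finset_exists_top {ι : Type*} [DecidableEq ι] (t : Finset ι) (ht : t.Nonempty)
    (r : ι → ι → Prop) (tot : ∀ i ∈ t, ∀ j ∈ t, r i j ∨ r j i)
    (htr : ∀ a b c : ι, r a b → r b c → r a c) : ∃ i ∈ t, ∀ j ∈ t, r j i := by
  classical
  induction t using Finset.induction_on with
  | empty => exact absurd ht (by simp)
  | @insert x t' hnotmem ih =>
    rcases t'.eq_empty_or_nonempty with rfl | hne
    · refine ⟨x, Finset.mem_insert_self _ _, ?_⟩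
      intro j hj
      rw [Finset.mem_insert] at hj
      rcases hj with rfl | hj
      · rcases tot j (Finset.mem_insert_self _ _) j (Finset.mem_insert_self _ _) with h | h <;>
          exact h
      · simp at hj
    · obtain ⟨i', hi't, hi'⟩ := ih hne (fun i hi j hj =>
        tot i (Finset.mem_insert_of_mem hi) j (Finset.mem_insert_of_mem hj))
      rcases tot x (Finset.mem_insert_self _ _) i' (Finset.mem_insert_of_mem hi't) with h | h
      · refine ⟨i', Finset.mem_insert_of_mem hi't, ?_⟩
        intro j hj
        rcases Finset.mem_insert.1 hj with rfl | hj
        · exact h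
        · exact hi' j hj
      · refine ⟨x, Finset.mem_insert_self _ _, ?_⟩
        intro j hj
        rcases Finset.mem_insert.1 hj with rfl | hj
        · rcases tot j (Finset.mem_insert_self _ _) j (Finset.mem_insert_self _ _) with h2 | h2 <;>
            exact h2
        · exact htr _ _ _ (hi' j hj) h

/-- A "trapezoid" function with slope parameter `s`: at most one ascending segment of
slope `+s`, then at most one constant segment, then at most one descending segment of
slope `-s` (equivalently, the minimum of three such lines). -/
def IsTrap (s : ℝ) (f : ℝ → ℝ) : Prop :=
  ∃ c₁ c₂ c₃ : ℝ, ∀ x : ℝ, f x = min (s * x + c₁) (min c₂ (c₃ - s * x))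

/-- From a finite set of candidate breakpoints between which `F` is affine,
we get a piecewise-affine structure. -/
lemma pw_assemble (F : ℝ → ℝ) (N : ℕ) (Bf : Finset ℝ) (h0 : (0:ℝ) ∈ Bf) (h1 : (1:ℝ) ∈ Bf)
    (hsub : ∀ x ∈ Bf, x ∈ Icc (0:ℝ) 1) (hcard : Bf.card ≤ N + 1)
    (haff : ∀ u ∈ Bf, ∀ v ∈ Bf, u < v → (∀ z ∈ Bf, ¬(u < z ∧ z < v)) →
      ∃ a b : ℝ, ∀ y ∈ Icc u v, F y = a * y + b) :
    PWAffine F N := by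
  classical
  have hne : Bf.Nonempty := ⟨0, h0⟩
  set L := Bf.sort (· ≤ ·) with hL
  have hlen : L.length = Bf.card := Finset.length_sort _
  have hlenpos : 0 < L.length := by
    rw [hlen]; exact Finset.card_pos.2 hne
  have hmemL : ∀ j (h : j < L.length), L.get ⟨j, h⟩ ∈ Bf := fun j h =>
    (Finset.mem_sort _).1 (L.get_mem _)
  have hsorted : L.Pairwise (· ≤ ·) := Finset.pairwise_sort _ _
  have hsortedlt : L.Pairwise (· < ·) := (Finset.sortedLT_sort _).pairwise
  have hle1 : ∀ j (h : j < L.length), L.get ⟨j, h⟩ ≤ 1 := fun j h => (hsub _ (hmemL j h)).2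
  have hmin : Bf.min' hne = 0 :=
    le_antisymm (Finset.min'_le _ _ h0) (hsub _ (Finset.min'_mem _ _)).1
  have hmax : Bf.max' hne = 1 :=
    le_antisymm (hsub _ (Finset.max'_mem _ _)).2 (Finset.le_max' _ _ h1)
  have hlast1 : ∀ j : ℕ, L.length ≤ j + 1 → L.getD j 1 = 1 := by
    intro j hj
    rcases lt_or_ge j L.length with h | h
    · have hj' : j = L.length - 1 := by omega
      rw [List.getD_eq_getElem _ _ h]
      have e := Finset.sorted_last_eq_max'_aux Bf (by omega : L.length - 1 < L.length) hne
      rw [hmax] at e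
      subst hj'
      exact e
    · exact List.getD_eq_default _ _ h
  refine ⟨fun i => L.getD i.val 1, ?_, ?_, ?_, ?_⟩
  · intro i j hij
    simp only []
    rcases lt_or_ge j.val L.length with hj | hj
    · have hi : i.val < L.length := lt_of_le_of_lt hij hj
      rw [List.getD_eq_getElem _ _ hi, List.getD_eq_getElem _ _ hj]
      exact hsorted.rel_get_of_le (by exact hij)
    · rw [List.getD_eq_default _ _ hj]
      rcases lt_or_ge i.val L.length with hi | hi
      · rw [List.getD_eq_getElem _ _ hi]; exact hle1 _ _
      · rw [List.getD_eq_default _ _ hi]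
  · show L.getD 0 1 = 0
    rw [List.getD_eq_getElem _ _ hlenpos]
    have := Finset.sorted_zero_eq_min'_aux Bf hlenpos hne
    rw [hmin] at this
    exact this
  · show L.getD N 1 = 1
    apply hlast1
    omega
  · intro i
    rcases lt_or_ge (i.val + 1) L.length with hj | hj
    · have hi : i.val < L.length := by omega
      have hlt : L.get ⟨i.val, hi⟩ < L.get ⟨i.val + 1, hj⟩ :=
        hsortedlt.rel_get_of_lt (by simp [Fin.lt_def])
      have hsep : ∀ z ∈ Bf, ¬(L.get ⟨i.val, hi⟩ < z ∧ z < L.get ⟨i.val + 1, hj⟩) := by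
        rintro z hz ⟨hz1, hz2⟩
        obtain ⟨⟨j, hjlen⟩, hjz⟩ := List.mem_iff_get.1 ((Finset.mem_sort (· ≤ ·)).2 hz)
        rcases le_or_gt j i.val with hji | hji
        · have : L.get ⟨j, hjlen⟩ ≤ L.get ⟨i.val, hi⟩ := hsorted.rel_get_of_le (by exact hji)
          rw [hjz] at this; linarith
        · have : L.get ⟨i.val + 1, hj⟩ ≤ L.get ⟨j, hjlen⟩ :=
            hsorted.rel_get_of_le (by exact hji)
          rw [hjz] at this; linarith
      obtain ⟨a, b, hab⟩ := haff _ (hmemL _ hi) _ (hmemL _ hj) hlt hsep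
      refine ⟨a, b, ?_⟩
      intro x hx
      apply hab
      have hx' : x ∈ Icc (L.getD i.val 1) (L.getD (i.val+1) 1) := hx
      rwa [List.getD_eq_getElem _ _ hi, List.getD_eq_getElem _ _ hj] at hx'
    · refine ⟨0, F 1, ?_⟩
      intro x hx'
      have hx : x ∈ Icc (L.getD i.val 1) (L.getD (i.val+1) 1) := hx'
      have e2 : L.getD (i.val + 1) 1 = 1 := hlast1 _ (by omega)
      have hx1 : x ≤ 1 := by rw [e2] at hx; exact hx.2
      have hx0 : 1 ≤ x := by
        rcases lt_or_ge i.val L.length with hi | hi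
        · have e1 : L.getD i.val 1 = 1 := hlast1 _ (by omega)
          rw [e1] at hx; exact hx.1
        · have e1 : L.getD i.val 1 = 1 := List.getD_eq_default _ _ hi
          rw [e1] at hx; exact hx.1
      have : x = 1 := le_antisymm hx1 hx0
      rw [this]; ring

set_option maxHeartbeats 1000000 in
/-- The upper envelope of finitely many trapezoid functions with a common slope `s > 0`
has at most `4k+2` breakpoints (i.e. at most `4k+1` linear pieces), where `k` is the
number of functions attaining the envelope somewhere on `[0,1]`. -/
theorem upper_envelope_breakpoints (m : ℕ) (s : ℝ) (hs : 0 < s)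
    (f : Fin (m + 1) → ℝ → ℝ) (hf : ∀ i, IsTrap s (f i)) (F : ℝ → ℝ)
    (hF : ∀ lam ∈ Icc (0:ℝ) 1, IsGreatest (Set.range fun i => f i lam) (F lam))
    (k : ℕ) (hk : {i : Fin (m + 1) | ∃ lam ∈ Icc (0:ℝ) 1, f i lam = F lam}.ncard = k) :
    PWAffine F (4 * k + 1) := by
  classical
  choose A B C hABC using hf
  set Sf : Finset (Fin (m+1)) :=
    Finset.univ.filter (fun i => ∃ lam ∈ Icc (0:ℝ) 1, f i lam = F lam) with hSf
  have hkk : Sf.card = k := by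
    have he : {i : Fin (m + 1) | ∃ lam ∈ Icc (0:ℝ) 1, f i lam = F lam} = ↑Sf := by
      ext i; simp [hSf]
    rw [he, Set.ncard_coe_finset] at hk
    exact hk
  -- basic envelope facts
  have hFin : ∀ x ∈ Icc (0:ℝ) 1, ∃ j, j ∈ Sf ∧ f j x = F x := by
    intro x hx
    obtain ⟨⟨j, hj⟩, _⟩ := hF x hx
    exact ⟨j, Finset.mem_filter.2 ⟨Finset.mem_univ _, ⟨x, hx, hj⟩⟩, hj⟩
  have hFub : ∀ x ∈ Icc (0:ℝ) 1, ∀ i, f i x ≤ F x := by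
    intro x hx i
    exact (hF x hx).2 ⟨i, rfl⟩
  have hSfne : Sf.Nonempty := by
    obtain ⟨j, hj, _⟩ := hFin 0 ⟨le_rfl, zero_le_one⟩
    exact ⟨j, hj⟩
  have hLip : ∀ x ∈ Icc (0:ℝ) 1, ∀ y ∈ Icc (0:ℝ) 1, y ≤ x →
      F x ≤ F y + s * (x - y) ∧ F y ≤ F x + s * (x - y) := by
    intro x hx y hy hxy
    obtain ⟨jx, _, hjx⟩ := hFin x hx
    obtain ⟨jy, _, hjy⟩ := hFin y hy
    constructor
    · rw [← hjx]
      calc f jx x ≤ f jx y + s * (x - y) := by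
            rw [hABC jx x, hABC jx y]; exact (trap_lip hs hxy).1
        _ ≤ F y + s * (x - y) := by linarith [hFub y hy jx]
    · rw [← hjy]
      calc f jy y ≤ f jy x + s * (x - y) := by
            rw [hABC jy x, hABC jy y]; exact (trap_lip hs hxy).2
        _ ≤ F x + s * (x - y) := by linarith [hFub x hx jy]
  -- the grid of candidate crossing points
  set X : Finset ℝ :=
    ({0, 1} : Finset ℝ) ∪
    (Finset.univ ×ˢ (Finset.univ : Finset (Fin (m+1)))).image
      (fun p : Fin (m+1) × Fin (m+1) => (B p.2 - A p.1) / s) ∪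
    (Finset.univ ×ˢ (Finset.univ : Finset (Fin (m+1)))).image
      (fun p : Fin (m+1) × Fin (m+1) => (C p.2 - A p.1) / (2*s)) ∪
    (Finset.univ ×ˢ (Finset.univ : Finset (Fin (m+1)))).image
      (fun p : Fin (m+1) × Fin (m+1) => (C p.2 - B p.1) / s) with hX
  have hX0 : (0:ℝ) ∈ X := by
    simp [hX]
  have hX1 : (1:ℝ) ∈ X := by
    simp [hX]
  have hXc1 : ∀ i j : Fin (m+1), (B j - A i) / s ∈ X := by
    intro i j
    simp only [hX, Finset.mem_union]
    left; left; right
    exact Finset.mem_image.2 ⟨(i, j), Finset.mem_product.2 ⟨Finset.mem_univ _, Finset.mem_univ _⟩, rfl⟩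
  have hXc2 : ∀ i j : Fin (m+1), (C j - A i) / (2*s) ∈ X := by
    intro i j
    simp only [hX, Finset.mem_union]
    left; right
    exact Finset.mem_image.2 ⟨(i, j), Finset.mem_product.2 ⟨Finset.mem_univ _, Finset.mem_univ _⟩, rfl⟩
  have hXc3 : ∀ i j : Fin (m+1), (C j - B i) / s ∈ X := by
    intro i j
    simp only [hX, Finset.mem_union]
    right
    exact Finset.mem_image.2 ⟨(i, j), Finset.mem_product.2 ⟨Finset.mem_univ _, Finset.mem_univ _⟩, rfl⟩
  have hsne0 : s ≠ 0 := ne_of_gt hs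
  have hsnen : s ≠ -s := by intro h; linarith
  -- key lemma: on a grid gap the envelope is one of the defining lines
  have hG : ∀ u v : ℝ, 0 ≤ u → u < v → v ≤ 1 → (∀ z, u < z → z < v → z ∉ X) →
      ∃ i, i ∈ Sf ∧ ∃ a b : ℝ, (a = s ∨ a = 0 ∨ a = -s) ∧
        ∀ y ∈ Icc u v, F y = a * y + b ∧ f i y = a * y + b := by
    intro u v hu0 huv hv1 hnoX
    have hzX : ∀ z : ℝ, z ∈ X → z ≤ u ∨ v ≤ z := by
      intro z hz
      by_contra hc
      push_neg at hc
      exact hnoX z hc.1 hc.2 hz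
    -- each trapezoid is a single line on the gap
    have hline : ∀ i : Fin (m+1), ∃ a b : ℝ,
        ((a = s ∧ b = A i) ∨ (a = 0 ∧ b = B i) ∨ (a = -s ∧ b = C i)) ∧
        (∀ y ∈ Icc u v, f i y = a * y + b) := by
      intro i
      have h1 : (∀ y ∈ Icc u v, s*y + A i ≤ 0*y + B i) ∨
          (∀ y ∈ Icc u v, 0*y + B i ≤ s*y + A i) := by
        apply affine_comparable (by simpa using hsne0)
        have := hzX _ (hXc1 i i)
        rwa [show (B i - A i)/(s - 0) = (B i - A i)/s by rw [sub_zero]]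
      have h2 : (∀ y ∈ Icc u v, s*y + A i ≤ (-s)*y + C i) ∨
          (∀ y ∈ Icc u v, (-s)*y + C i ≤ s*y + A i) := by
        apply affine_comparable hsnen
        have := hzX _ (hXc2 i i)
        rwa [show (C i - A i)/(s - -s) = (C i - A i)/(2*s) by rw [show s - -s = 2*s by ring]]
      have h3 : (∀ y ∈ Icc u v, 0*y + B i ≤ (-s)*y + C i) ∨
          (∀ y ∈ Icc u v, (-s)*y + C i ≤ 0*y + B i) := by
        apply affine_comparable (by intro h; exact hsne0 (by linarith))
        have := hzX _ (hXc3 i i)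
        rwa [show (C i - B i)/(0 - -s) = (C i - B i)/s by rw [show (0:ℝ) - -s = s by ring]]
      rcases h1 with h1 | h1 <;> rcases h2 with h2 | h2 <;> rcases h3 with h3 | h3
      -- case 1: asc ≤ plat, asc ≤ desc, plat ≤ desc : asc
      · exact ⟨s, A i, Or.inl ⟨rfl, rfl⟩, fun y hy => by
          rw [hABC i y]
          exact min_eq_left (le_min (by linarith [h1 y hy]) (by linarith [h2 y hy]))⟩
      -- case 2: asc ≤ plat, asc ≤ desc, desc ≤ plat : asc
      · exact ⟨s, A i, Or.inl ⟨rfl, rfl⟩, fun y hy => by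
          rw [hABC i y]
          exact min_eq_left (le_min (by linarith [h1 y hy]) (by linarith [h2 y hy]))⟩
      -- case 3: asc ≤ plat, desc ≤ asc, plat ≤ desc : desc
      · refine ⟨-s, C i, Or.inr (Or.inr ⟨rfl, rfl⟩), fun y hy => ?_⟩
        rw [hABC i y]
        rw [min_eq_right (by linarith [h1 y hy, h2 y hy] : C i - s * y ≤ B i)]
        rw [min_eq_right (by linarith [h2 y hy] : C i - s * y ≤ s * y + A i)]
        ring
      -- case 4: asc ≤ plat, desc ≤ asc, desc ≤ plat : desc
      · refine ⟨-s, C i, Or.inr (Or.inr ⟨rfl, rfl⟩), fun y hy => ?_⟩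
        rw [hABC i y]
        rw [min_eq_right (by linarith [h3 y hy] : C i - s * y ≤ B i)]
        rw [min_eq_right (by linarith [h2 y hy] : C i - s * y ≤ s * y + A i)]
        ring
      -- case 5: plat ≤ asc, asc ≤ desc, plat ≤ desc : plat
      · refine ⟨0, B i, Or.inr (Or.inl ⟨rfl, rfl⟩), fun y hy => ?_⟩
        rw [hABC i y]
        rw [min_eq_left (by linarith [h3 y hy] : B i ≤ C i - s * y)]
        rw [min_eq_right (by linarith [h1 y hy] : B i ≤ s * y + A i)]
        ring
      -- case 6: plat ≤ asc, asc ≤ desc, desc ≤ plat : desc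
      · refine ⟨-s, C i, Or.inr (Or.inr ⟨rfl, rfl⟩), fun y hy => ?_⟩
        rw [hABC i y]
        rw [min_eq_right (by linarith [h3 y hy] : C i - s * y ≤ B i)]
        rw [min_eq_right (by linarith [h3 y hy, h1 y hy] : C i - s * y ≤ s * y + A i)]
        ring
      -- case 7: plat ≤ asc, desc ≤ asc, plat ≤ desc : plat
      · refine ⟨0, B i, Or.inr (Or.inl ⟨rfl, rfl⟩), fun y hy => ?_⟩
        rw [hABC i y]
        rw [min_eq_left (by linarith [h3 y hy] : B i ≤ C i - s * y)]
        rw [min_eq_right (by linarith [h1 y hy] : B i ≤ s * y + A i)]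
        ring
      -- case 8: plat ≤ asc, desc ≤ asc, desc ≤ plat : desc
      · refine ⟨-s, C i, Or.inr (Or.inr ⟨rfl, rfl⟩), fun y hy => ?_⟩
        rw [hABC i y]
        rw [min_eq_right (by linarith [h3 y hy] : C i - s * y ≤ B i)]
        rw [min_eq_right (by linarith [h2 y hy] : C i - s * y ≤ s * y + A i)]
        ring
    -- totality of the pointwise order on the gap
    have htot : ∀ i ∈ Sf, ∀ j ∈ Sf,
        (∀ y ∈ Icc u v, f i y ≤ f j y) ∨ (∀ y ∈ Icc u v, f j y ≤ f i y) := by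
      intro i _ j _
      obtain ⟨a, b, hcl, hfa⟩ := hline i
      obtain ⟨p, q, hclj, hfp⟩ := hline j
      have key : (∀ y ∈ Icc u v, a*y+b ≤ p*y+q) ∨ (∀ y ∈ Icc u v, p*y+q ≤ a*y+b) := by
        rcases hcl with ⟨ha, hb⟩ | ⟨ha, hb⟩ | ⟨ha, hb⟩ <;>
          rcases hclj with ⟨hp, hq⟩ | ⟨hp, hq⟩ | ⟨hp, hq⟩ <;> rw [ha, hb, hp, hq]
        · rcases le_total (A i) (A j) with h | h
          · left; intro y hy; linarith
          · right; intro y hy; linarith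
        · apply affine_comparable (by simpa using hsne0)
          have := hzX _ (hXc1 i j)
          rwa [show (B j - A i)/(s - 0) = (B j - A i)/s by rw [sub_zero]]
        · apply affine_comparable hsnen
          have := hzX _ (hXc2 i j)
          rwa [show (C j - A i)/(s - -s) = (C j - A i)/(2*s) by rw [show s - -s = 2*s by ring]]
        · apply affine_comparable (fun h => hsne0 h.symm)
          have := hzX _ (hXc1 j i)
          rwa [show (A j - B i)/(0 - s) = (B i - A j)/s by
            rw [zero_sub, div_neg, ← neg_div]; ring_nf]
        · rcases le_total (B i) (B j) with h | h
          · left; intro y hy; linarith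
          · right; intro y hy; linarith
        · apply affine_comparable (by intro h; exact hsne0 (by linarith))
          have := hzX _ (hXc3 i j)
          rwa [show (C j - B i)/(0 - -s) = (C j - B i)/s by rw [show (0:ℝ) - -s = s by ring]]
        · apply affine_comparable (fun h => hsnen h.symm)
          have := hzX _ (hXc2 j i)
          rwa [show (A j - C i)/(-s - s) = (C i - A j)/(2*s) by
            rw [show -s - s = -(2*s) by ring, div_neg, ← neg_div]; ring_nf]
        · apply affine_comparable (by intro h; exact hsne0 (by linarith))
          have := hzX _ (hXc3 j i)
          rwa [show (B j - C i)/(-s - 0) = (C i - B j)/s by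
            rw [show -s - 0 = -s by ring, div_neg, ← neg_div]; ring_nf]
        · rcases le_total (C i) (C j) with h | h
          · left; intro y hy; linarith
          · right; intro y hy; linarith
      rcases key with key | key
      · left; intro y hy; rw [hfa y hy, hfp y hy]; exact key y hy
      · right; intro y hy; rw [hfa y hy, hfp y hy]; exact key y hy
    obtain ⟨i0, hi0, htop⟩ := finset_exists_top Sf hSfne
      (fun i j => ∀ y ∈ Icc u v, f i y ≤ f j y) htot
      (fun i j l hij hjl y hy => le_trans (hij y hy) (hjl y hy))
    obtain ⟨a, b, hcl, hfa⟩ := hline i0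
    refine ⟨i0, hi0, a, b, ?_, ?_⟩
    · rcases hcl with ⟨h, _⟩ | ⟨h, _⟩ | ⟨h, _⟩
      · exact Or.inl h
      · exact Or.inr (Or.inl h)
      · exact Or.inr (Or.inr h)
    · intro y hy
      have hy01 : y ∈ Icc (0:ℝ) 1 := ⟨le_trans hu0 hy.1, le_trans hy.2 hv1⟩
      refine ⟨?_, hfa y hy⟩
      obtain ⟨j, hjSf, hjy⟩ := hFin y hy01
      have h1 : F y ≤ f i0 y := by rw [← hjy]; exact htop j hjSf y hy
      have h2 : f i0 y ≤ F y := hFub y hy01 i0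
      rw [le_antisymm h1 h2, hfa y hy]
  -- right-line existence
  have hRL : ∀ u : ℝ, 0 ≤ u → u < 1 → ∃ v, u < v ∧ v ≤ 1 ∧
      ∃ i, i ∈ Sf ∧ ∃ a b : ℝ, (a = s ∨ a = 0 ∨ a = -s) ∧
        ∀ y ∈ Icc u v, F y = a * y + b ∧ f i y = a * y + b := by
    intro u hu0 hu1
    have hcand : ((X.filter (fun z => u < z))).Nonempty := ⟨1, Finset.mem_filter.2 ⟨hX1, hu1⟩⟩
    set v := (X.filter (fun z => u < z)).min' hcand with hv
    have hvmem := (X.filter (fun z => u < z)).min'_mem hcand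
    rw [Finset.mem_filter] at hvmem
    have huv : u < v := hvmem.2
    have hv1 : v ≤ 1 := Finset.min'_le _ _ (Finset.mem_filter.2 ⟨hX1, hu1⟩)
    have hnoX : ∀ z, u < z → z < v → z ∉ X := by
      intro z hz1 hz2 hzX
      have : v ≤ z := Finset.min'_le _ _ (Finset.mem_filter.2 ⟨hzX, hz1⟩)
      linarith
    obtain ⟨i, hi, a, b, hsl, hfab⟩ := hG u v hu0 huv hv1 hnoX
    exact ⟨v, huv, hv1, i, hi, a, b, hsl, hfab⟩
  -- local affineness
  set LA : ℝ → Prop := fun x => ∃ u v a b : ℝ,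
    0 ≤ u ∧ u < x ∧ x < v ∧ v ≤ 1 ∧ ∀ y ∈ Icc u v, F y = a * y + b with hLA
  -- genuine breakpoints
  set B0f : Finset ℝ := X.filter (fun x => 0 < x ∧ x < 1 ∧ ¬ LA x) with hB0f
  have hBP : ∀ x : ℝ, 0 < x → x < 1 → ¬ LA x → x ∈ B0f := by
    intro x hx0 hx1 hnLA
    have hxX : x ∈ X := by
      by_contra hxX
      apply hnLA
      have hc1 : ((X.filter (fun z => z < x))).Nonempty :=
        ⟨0, Finset.mem_filter.2 ⟨hX0, hx0⟩⟩
      have hc2 : ((X.filter (fun z => x < z))).Nonempty :=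
        ⟨1, Finset.mem_filter.2 ⟨hX1, hx1⟩⟩
      set u := (X.filter (fun z => z < x)).max' hc1 with hu
      set v := (X.filter (fun z => x < z)).min' hc2 with hvv
      have humem := (X.filter (fun z => z < x)).max'_mem hc1
      rw [Finset.mem_filter] at humem
      have hvmem := (X.filter (fun z => x < z)).min'_mem hc2
      rw [Finset.mem_filter] at hvmem
      have h0m : (0:ℝ) ∈ X.filter (fun z => z < x) := Finset.mem_filter.2 ⟨hX0, hx0⟩
      have h1m : (1:ℝ) ∈ X.filter (fun z => x < z) := Finset.mem_filter.2 ⟨hX1, hx1⟩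
      have hu0 : 0 ≤ u := Finset.le_max' _ _ h0m
      have hv1 : v ≤ 1 := Finset.min'_le _ _ h1m
      have hnoX : ∀ z, u < z → z < v → z ∉ X := by
        intro z hz1 hz2 hzX
        rcases lt_trichotomy z x with h | h | h
        · have hzm : z ∈ X.filter (fun w => w < x) := Finset.mem_filter.2 ⟨hzX, h⟩
          have : z ≤ u := Finset.le_max' _ _ hzm
          linarith
        · exact hxX (h ▸ hzX)
        · have hzm : z ∈ X.filter (fun w => x < w) := Finset.mem_filter.2 ⟨hzX, h⟩
          have : v ≤ z := Finset.min'_le _ _ hzm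
          linarith
      obtain ⟨i, hi, a, b, hsl, hfab⟩ := hG u v hu0 (lt_trans humem.2 hvmem.2) hv1 hnoX
      exact ⟨u, v, a, b, hu0, humem.2, hvmem.2, hv1, fun y hy => (hfab y hy).1⟩
    exact Finset.mem_filter.2 ⟨hxX, hx0, hx1, hnLA⟩
  -- extension lemma: on an interval free of genuine breakpoints, F is affine
  have hEXT : ∀ n : ℕ, ∀ p u : ℝ, (X.filter (fun z => p < z ∧ z < u)).card ≤ n →
      0 ≤ p → p < u → u ≤ 1 → (∀ z, p < z → z < u → z ∉ B0f) →
      ∃ a b : ℝ, ∀ y ∈ Icc p u, F y = a * y + b := by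
    intro n
    induction n with
    | zero =>
      intro p u hcard hp0 hpu hu1 hnoB
      have hnoX : ∀ z, p < z → z < u → z ∉ X := by
        intro z h1 h2 hzX
        have : z ∈ X.filter (fun z => p < z ∧ z < u) := Finset.mem_filter.2 ⟨hzX, h1, h2⟩
        have := Finset.card_pos.2 ⟨z, this⟩
        omega
      obtain ⟨i, _, a, b, _, hfab⟩ := hG p u hp0 hpu hu1 hnoX
      exact ⟨a, b, fun y hy => (hfab y hy).1⟩
    | succ n ih =>
      intro p u hcard hp0 hpu hu1 hnoB
      by_cases hW : (X.filter (fun z => p < z ∧ z < u)).Nonempty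
      · set z := (X.filter (fun z => p < z ∧ z < u)).max' hW with hz
        have hzmem := (X.filter (fun z => p < z ∧ z < u)).max'_mem hW
        rw [Finset.mem_filter] at hzmem
        obtain ⟨hzX, hpz, hzu⟩ := hzmem
        have hz0 : 0 < z := lt_of_le_of_lt hp0 hpz
        have hz1 : z < 1 := lt_of_lt_of_le hzu hu1
        have hLAz : LA z := by
          by_contra hnLA
          exact hnoB z hpz hzu (hBP z hz0 hz1 hnLA)
        obtain ⟨al, be, as_, bs, hal0, halz, hzbe, hbe1, hstar⟩ := hLAz
        -- left part by induction
        have hsubset : X.filter (fun w => p < w ∧ w < z) ⊆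
            (X.filter (fun w => p < w ∧ w < u)).erase z := by
          intro w hw
          rw [Finset.mem_filter] at hw
          exact Finset.mem_erase.2 ⟨ne_of_lt hw.2.2,
            Finset.mem_filter.2 ⟨hw.1, hw.2.1, lt_trans hw.2.2 hzu⟩⟩
        have hcard' : (X.filter (fun w => p < w ∧ w < z)).card ≤ n := by
          have h1 := Finset.card_le_card hsubset
          have h2 := Finset.card_erase_of_mem
            (Finset.mem_filter.2 ⟨hzX, hpz, hzu⟩ :
              z ∈ X.filter (fun w => p < w ∧ w < u))
          omega
        obtain ⟨a1, b1, hl1⟩ := ih p z hcard' hp0 hpz (le_of_lt hz1)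
          (fun w h1 h2 => hnoB w h1 (lt_trans h2 hzu))
        -- right part via hG
        have hnoX2 : ∀ w, z < w → w < u → w ∉ X := by
          intro w h1 h2 hwX
          have : w ≤ z := Finset.le_max' _ _
            (Finset.mem_filter.2 ⟨hwX, lt_trans hpz h1, h2⟩)
          linarith
        obtain ⟨i2, _, a2, b2, _, hfab2⟩ := hG z u hz0.le hzu hu1 hnoX2
        have hl2 : ∀ y ∈ Icc z u, F y = a2 * y + b2 := fun y hy => (hfab2 y hy).1
        -- glue
        set eta := max al p with heta
        have hetaz : eta < z := max_lt halz hpz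
        have hel : a1 = as_ ∧ b1 = bs := by
          apply affine_eq_of_two (ne_of_lt hetaz)
          · rw [← hl1 eta ⟨le_max_right _ _, hetaz.le⟩,
              ← hstar eta ⟨le_max_left _ _, le_trans hetaz.le (le_of_lt hzbe)⟩]
          · rw [← hl1 z ⟨hpz.le, le_refl _⟩, ← hstar z ⟨halz.le, hzbe.le⟩]
        set theta := min be u with htheta
        have hztheta : z < theta := lt_min hzbe hzu
        have her : a2 = as_ ∧ b2 = bs := by
          apply affine_eq_of_two (ne_of_gt hztheta)
          · rw [← hl2 theta ⟨hztheta.le, min_le_right _ _⟩,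
              ← hstar theta ⟨le_trans halz.le hztheta.le, min_le_left _ _⟩]
          · rw [← hl2 z ⟨le_refl _, hzu.le⟩, ← hstar z ⟨halz.le, hzbe.le⟩]
        refine ⟨a1, b1, ?_⟩
        intro y hy
        rcases le_total y z with h | h
        · exact hl1 y ⟨hy.1, h⟩
        · rw [hl2 y ⟨h, hy.2⟩, her.1, her.2, hel.1, hel.2]
      · have hnoX : ∀ w, p < w → w < u → w ∉ X := by
          intro w h1 h2 hwX
          exact hW ⟨w, Finset.mem_filter.2 ⟨hwX, h1, h2⟩⟩
        obtain ⟨i, _, a, b, _, hfab⟩ := hG p u hp0 hpu hu1 hnoX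
        exact ⟨a, b, fun y hy => (hfab y hy).1⟩
  have hEXT' : ∀ p u : ℝ, 0 ≤ p → p < u → u ≤ 1 → (∀ z, p < z → z < u → z ∉ B0f) →
      ∃ a b : ℝ, ∀ y ∈ Icc p u, F y = a * y + b :=
    fun p u => hEXT (X.filter (fun z => p < z ∧ z < u)).card p u le_rfl
  -- uniqueness of the right line
  have hUniq : ∀ u v v' a b a' b' : ℝ, u < v → u < v' →
      (∀ y ∈ Icc u v, F y = a * y + b) → (∀ y ∈ Icc u v', F y = a' * y + b') →
      a = a' ∧ b = b' := by
    intro u v v' a b a' b' hv hv' h1 h2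
    have hw : u < min v v' := lt_min hv hv'
    apply affine_eq_of_two (ne_of_lt hw)
    · rw [← h1 u ⟨le_refl _, hv.le⟩, ← h2 u ⟨le_refl _, hv'.le⟩]
    · rw [← h1 (min v v') ⟨hw.le, min_le_left _ _⟩,
        ← h2 (min v v') ⟨hw.le, min_le_right _ _⟩]
  -- breakpoint sets
  set Df : Finset ℝ := insert 0 B0f with hDf
  have hB0f01 : ∀ x ∈ B0f, 0 < x ∧ x < 1 := by
    intro x hx
    rw [hB0f, Finset.mem_filter] at hx
    exact ⟨hx.2.1, hx.2.2.1⟩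
  have hDf01 : ∀ u ∈ Df, 0 ≤ u ∧ u < 1 := by
    intro u hu
    rcases Finset.mem_insert.1 hu with rfl | hu
    · exact ⟨le_refl _, zero_lt_one⟩
    · exact ⟨(hB0f01 u hu).1.le, (hB0f01 u hu).2⟩
  set RS : ℝ → ℝ → Prop := fun u σ => ∃ v b : ℝ, u < v ∧ v ≤ 1 ∧
    ∀ y ∈ Icc u v, F y = σ * y + b with hRS
  have hRSfull : ∀ u : ℝ, 0 ≤ u → u < 1 →
      ∃ σ : ℝ, (σ = s ∨ σ = 0 ∨ σ = -s) ∧ RS u σ := by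
    intro u h0 h1
    obtain ⟨v, huv, hv1, i, hi, a, b, hsl, hfab⟩ := hRL u h0 h1
    exact ⟨a, hsl, v, b, huv, hv1, fun y hy => (hfab y hy).1⟩
  have hRSuniq : ∀ u σ σ' : ℝ, RS u σ → RS u σ' → σ = σ' := by
    rintro u σ σ' ⟨v, b, hv, _, h1⟩ ⟨v', b', hv', _, h2⟩
    exact (hUniq u v v' σ b σ' b' hv hv' h1 h2).1
  set Ds := Df.filter (fun u => RS u s) with hDs
  set D0 := Df.filter (fun u => RS u 0) with hD0
  set Dn := Df.filter (fun u => RS u (-s)) with hDn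
  have hsplit : Df.card ≤ Ds.card + D0.card + Dn.card := by
    have hsub : Df ⊆ Ds ∪ D0 ∪ Dn := by
      intro u hu
      obtain ⟨σ, hσ, hRSu⟩ := hRSfull u (hDf01 u hu).1 (hDf01 u hu).2
      rcases hσ with rfl | rfl | rfl
      · exact Finset.mem_union_left _ (Finset.mem_union_left _ (Finset.mem_filter.2 ⟨hu, hRSu⟩))
      · exact Finset.mem_union_left _ (Finset.mem_union_right _ (Finset.mem_filter.2 ⟨hu, hRSu⟩))
      · exact Finset.mem_union_right _ (Finset.mem_filter.2 ⟨hu, hRSu⟩)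
    calc Df.card ≤ (Ds ∪ D0 ∪ Dn).card := Finset.card_le_card hsub
      _ ≤ (Ds ∪ D0).card + Dn.card := Finset.card_union_le _ _
      _ ≤ Ds.card + D0.card + Dn.card := by linarith [Finset.card_union_le Ds D0]
  -- witness for ascending pieces
  have hWs : ∀ u ∈ Ds, ∃ i, i ∈ Sf ∧ ∃ v, u < v ∧ v ≤ 1 ∧
      ∀ y ∈ Icc u v, F y = s * y + A i ∧ f i y = s * y + A i := by
    intro u hu
    rw [hDs, Finset.mem_filter] at hu
    obtain ⟨huDf, hRSu⟩ := hu
    obtain ⟨h0u, hu1⟩ := hDf01 u huDf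
    obtain ⟨v, huv, hv1, i, hiSf, a, b, _, hfab⟩ := hRL u h0u hu1
    obtain ⟨v₂, b₂, huv₂, hv₂1, hFs⟩ := hRSu
    have hab : a = s ∧ b = b₂ :=
      hUniq u v v₂ a b s b₂ huv huv₂ (fun y hy => (hfab y hy).1) hFs
    have hmin : ∀ y ∈ Icc u v, min (s*y + A i) (min (B i) (C i - s*y)) = a * y + b := by
      intro y hy
      rw [← hABC i y]; exact (hfab y hy).2
    rcases trap_classify huv hmin with ⟨_, hb⟩ | ⟨ha0, _⟩ | ⟨han, _⟩
    · refine ⟨i, hiSf, v, huv, hv1, fun y hy => ?_⟩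
      rw [← hab.1, ← hb]
      exact hfab y hy
    · exact absurd (by linarith [hab.1, ha0] : s = (0:ℝ)) hsne0
    · exact absurd (by linarith [hab.1, han] : s = -s) hsnen
  -- witness for descending pieces
  have hWn : ∀ u ∈ Dn, ∃ i, i ∈ Sf ∧ ∃ v, u < v ∧ v ≤ 1 ∧
      ∀ y ∈ Icc u v, F y = C i - s * y ∧ f i y = C i - s * y := by
    intro u hu
    rw [hDn, Finset.mem_filter] at hu
    obtain ⟨huDf, hRSu⟩ := hu
    obtain ⟨h0u, hu1⟩ := hDf01 u huDf
    obtain ⟨v, huv, hv1, i, hiSf, a, b, _, hfab⟩ := hRL u h0u hu1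
    obtain ⟨v₂, b₂, huv₂, hv₂1, hFs⟩ := hRSu
    have hab : a = -s ∧ b = b₂ :=
      hUniq u v v₂ a b (-s) b₂ huv huv₂ (fun y hy => (hfab y hy).1) hFs
    have hmin : ∀ y ∈ Icc u v, min (s*y + A i) (min (B i) (C i - s*y)) = a * y + b := by
      intro y hy
      rw [← hABC i y]; exact (hfab y hy).2
    rcases trap_classify huv hmin with ⟨has, _⟩ | ⟨ha0, _⟩ | ⟨_, hb⟩
    · exact absurd (by linarith [has, hab.1] : s = -s) hsnen
    · exact absurd (by linarith [ha0, hab.1] : s = (0:ℝ)) hsne0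
    · refine ⟨i, hiSf, v, huv, hv1, fun y hy => ?_⟩
      have h1 := (hfab y hy).1
      have h2 := (hfab y hy).2
      rw [hab.1, hb] at h1 h2
      constructor <;> linarith
  -- injection from ascending breakpoints into attaining functions
  set phiS : ℝ → Fin (m+1) := fun u =>
    if h : ∃ i, i ∈ Sf ∧ ∃ v, u < v ∧ v ≤ 1 ∧
        ∀ y ∈ Icc u v, F y = s * y + A i ∧ f i y = s * y + A i then h.choose
    else ⟨0, Nat.succ_pos m⟩ with hphiSdef
  have hphiS : ∀ u ∈ Ds, phiS u ∈ Sf ∧ ∃ v, u < v ∧ v ≤ 1 ∧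
      ∀ y ∈ Icc u v, F y = s * y + A (phiS u) ∧ f (phiS u) y = s * y + A (phiS u) := by
    intro u hu
    have h := hWs u hu
    have e : phiS u = h.choose := by simp only [hphiSdef]; exact dif_pos h
    rw [e]
    exact h.choose_spec
  have keyS : ∀ u1 ∈ Ds, ∀ u2 ∈ Ds, u1 < u2 → phiS u1 ≠ phiS u2 := by
    intro u1 h1 u2 h2 h12 heq
    obtain ⟨hiSf1, v1, hv1a, hv1b, hfa1⟩ := hphiS u1 h1
    obtain ⟨hiSf2, v2, hv2a, hv2b, hfa2⟩ := hphiS u2 h2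
    rw [← heq] at hfa2
    have hray : ∀ y, y ≤ v2 → f (phiS u1) y = s * y + A (phiS u1) := by
      intro y hy
      have h := (hfa2 v2 ⟨hv2a.le, le_refl _⟩).2
      rw [hABC (phiS u1) v2] at h
      have := trap_ray_left hs h hy
      rw [hABC (phiS u1) y]; exact this
    have h0u1 : 0 ≤ u1 := (hDf01 u1 (Finset.mem_filter.1 h1).1).1
    have hFge : ∀ y ∈ Icc u1 v2, s * y + A (phiS u1) ≤ F y := by
      intro y hy
      rw [← hray y hy.2]
      exact hFub y ⟨le_trans h0u1 hy.1, le_trans hy.2 hv2b⟩ _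
    have hFle : ∀ y ∈ Icc u1 v2, F y ≤ s * y + A (phiS u1) := by
      intro y hy
      have hy01 : y ∈ Icc (0:ℝ) 1 := ⟨le_trans h0u1 hy.1, le_trans hy.2 hv2b⟩
      have hu101 : u1 ∈ Icc (0:ℝ) 1 := ⟨h0u1, by linarith [hy.1, hy01.2]⟩
      have hlip := (hLip y hy01 u1 hu101 hy.1).1
      have hFu1 : F u1 = s * u1 + A (phiS u1) := (hfa1 u1 ⟨le_refl _, hv1a.le⟩).1
      linarith
    have hu2B0 : u2 ∈ B0f := by
      rcases Finset.mem_insert.1 (Finset.mem_filter.1 h2).1 with h | h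
      · exact absurd h (by linarith)
      · exact h
    have hnLA : ¬ LA u2 := (Finset.mem_filter.1 hu2B0).2.2.2
    exact hnLA ⟨u1, v2, s, A (phiS u1), h0u1, h12, hv2a, hv2b, fun y hy =>
      le_antisymm (hFle y hy) (hFge y hy)⟩
  have hC1 : Ds.card ≤ k := by
    rw [← hkk]
    apply Finset.card_le_card_of_injOn phiS (fun u hu => (hphiS u hu).1)
    intro u1 h1 u2 h2 heq
    by_contra hne
    rcases lt_or_gt_of_ne hne with h | h
    · exact keyS u1 h1 u2 h2 h heq
    · exact keyS u2 h2 u1 h1 h heq.symm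
  -- injection from descending breakpoints into attaining functions
  set phiN : ℝ → Fin (m+1) := fun u =>
    if h : ∃ i, i ∈ Sf ∧ ∃ v, u < v ∧ v ≤ 1 ∧
        ∀ y ∈ Icc u v, F y = C i - s * y ∧ f i y = C i - s * y then h.choose
    else ⟨0, Nat.succ_pos m⟩ with hphiNdef
  have hphiN : ∀ u ∈ Dn, phiN u ∈ Sf ∧ ∃ v, u < v ∧ v ≤ 1 ∧
      ∀ y ∈ Icc u v, F y = C (phiN u) - s * y ∧ f (phiN u) y = C (phiN u) - s * y := by
    intro u hu
    have h := hWn u hu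
    have e : phiN u = h.choose := by simp only [hphiNdef]; exact dif_pos h
    rw [e]
    exact h.choose_spec
  have keyN : ∀ u1 ∈ Dn, ∀ u2 ∈ Dn, u1 < u2 → phiN u1 ≠ phiN u2 := by
    intro u1 h1 u2 h2 h12 heq
    obtain ⟨hiSf1, v1, hv1a, hv1b, hfa1⟩ := hphiN u1 h1
    obtain ⟨hiSf2, v2, hv2a, hv2b, hfa2⟩ := hphiN u2 h2
    rw [← heq] at hfa2
    have hray : ∀ y, u1 ≤ y → f (phiN u1) y = C (phiN u1) - s * y := by
      intro y hy
      have h := (hfa1 u1 ⟨le_refl _, hv1a.le⟩).2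
      rw [hABC (phiN u1) u1] at h
      have := trap_ray_right hs h hy
      rw [hABC (phiN u1) y]; exact this
    have h0u1 : 0 ≤ u1 := (hDf01 u1 (Finset.mem_filter.1 h1).1).1
    have hu21 : u2 < 1 := (hDf01 u2 (Finset.mem_filter.1 h2).1).2
    have hFge : ∀ y ∈ Icc u1 v2, C (phiN u1) - s * y ≤ F y := by
      intro y hy
      rw [← hray y hy.1]
      exact hFub y ⟨le_trans h0u1 hy.1, le_trans hy.2 hv2b⟩ _
    have hFle : ∀ y ∈ Icc u1 v2, F y ≤ C (phiN u1) - s * y := by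
      intro y hy
      have hy01 : y ∈ Icc (0:ℝ) 1 := ⟨le_trans h0u1 hy.1, le_trans hy.2 hv2b⟩
      have hu201 : u2 ∈ Icc (0:ℝ) 1 := ⟨by linarith, hu21.le⟩
      have hFu2 : F u2 = C (phiN u1) - s * u2 := (hfa2 u2 ⟨le_refl _, hv2a.le⟩).1
      rcases le_total y u2 with h | h
      · have hlip := (hLip u2 hu201 y hy01 h).2
        linarith
      · have := (hfa2 y ⟨h, hy.2⟩).1
        linarith
    have hu2B0 : u2 ∈ B0f := by
      rcases Finset.mem_insert.1 (Finset.mem_filter.1 h2).1 with h | h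
      · exact absurd h (by linarith)
      · exact h
    have hnLA : ¬ LA u2 := (Finset.mem_filter.1 hu2B0).2.2.2
    refine hnLA ⟨u1, v2, -s, C (phiN u1), h0u1, h12, hv2a, hv2b, fun y hy => ?_⟩
    have := le_antisymm (hFle y hy) (hFge y hy)
    linarith
  have hC2 : Dn.card ≤ k := by
    rw [← hkk]
    apply Finset.card_le_card_of_injOn phiN (fun u hu => (hphiN u hu).1)
    intro u1 h1 u2 h2 heq
    by_contra hne
    rcases lt_or_gt_of_ne hne with h | h
    · exact keyN u1 h1 u2 h2 h heq
    · exact keyN u2 h2 u1 h1 h heq.symm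
  -- the full breakpoint set including 1
  set Bff : Finset ℝ := insert 1 Df with hBffdef
  have hBffsub : ∀ x ∈ Bff, 0 ≤ x ∧ x ≤ 1 := by
    intro x hx
    rcases Finset.mem_insert.1 hx with rfl | hx
    · exact ⟨zero_le_one, le_refl _⟩
    · exact ⟨(hDf01 x hx).1, (hDf01 x hx).2.le⟩
  have h0Bff : (0:ℝ) ∈ Bff := Finset.mem_insert_of_mem (Finset.mem_insert_self _ _)
  have h1Bff : (1:ℝ) ∈ Bff := Finset.mem_insert_self _ _
  -- injection from plateau breakpoints to their predecessors
  set psi : ℝ → ℝ := fun u =>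
    if h : (Bff.filter (fun z => z < u)).Nonempty then (Bff.filter (fun z => z < u)).max' h
    else 0 with hpsidef
  have hpsi : ∀ u : ℝ, 0 < u → psi u < u ∧ psi u ∈ Bff ∧
      (∀ z ∈ Bff, z < u → z ≤ psi u) := by
    intro u hu0
    have hne' : (Bff.filter (fun z => z < u)).Nonempty :=
      ⟨0, Finset.mem_filter.2 ⟨h0Bff, hu0⟩⟩
    have e : psi u = (Bff.filter (fun z => z < u)).max' hne' := by
      simp only [hpsidef]; exact dif_pos hne'
    have hmem := (Bff.filter (fun z => z < u)).max'_mem hne'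
    rw [Finset.mem_filter] at hmem
    refine ⟨e ▸ hmem.2, e ▸ hmem.1, ?_⟩
    intro z hz hzu
    rw [e]
    have hzm : z ∈ Bff.filter (fun w => w < u) := Finset.mem_filter.2 ⟨hz, hzu⟩
    exact Finset.le_max' _ _ hzm
  have hE0 : ∀ u ∈ D0.erase 0, 0 < u ∧ u < 1 ∧ ¬ LA u ∧ RS u 0 := by
    intro u hu
    obtain ⟨hune, huD0⟩ := Finset.mem_erase.1 hu
    have huDf := (Finset.mem_filter.1 huD0).1
    have hB0 : u ∈ B0f := by
      rcases Finset.mem_insert.1 huDf with h | h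
      · exact absurd h hune
      · exact h
    have hf := Finset.mem_filter.1 hB0
    exact ⟨hf.2.1, hf.2.2.1, hf.2.2.2, (Finset.mem_filter.1 huD0).2⟩
  have hpsimem : ∀ u ∈ D0.erase 0, psi u ∈ Ds ∪ Dn := by
    intro u hu
    obtain ⟨hu0, hu1, hnLA, hRSu⟩ := hE0 u hu
    obtain ⟨hpu, hpBff, hpmax⟩ := hpsi u hu0
    have hp0 : 0 ≤ psi u := (hBffsub _ hpBff).1
    have hp1 : psi u < 1 := lt_trans hpu hu1
    have hpDf : psi u ∈ Df := by
      rcases Finset.mem_insert.1 hpBff with h | h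
      · exact absurd h (by linarith)
      · exact h
    have hnoB : ∀ z, psi u < z → z < u → z ∉ B0f := by
      intro z h1 h2 hzB0
      have hzBff : z ∈ Bff :=
        Finset.mem_insert_of_mem (Finset.mem_insert_of_mem hzB0)
      have := hpmax z hzBff h2
      linarith
    obtain ⟨a, b, hab⟩ := hEXT' (psi u) u hp0 hpu hu1.le hnoB
    obtain ⟨v0, b0, huv0, hv01, hf0⟩ := hRSu
    have ha0 : a ≠ 0 := by
      intro ha
      apply hnLA
      have hbb : b = b0 := by
        have e1 := hab u ⟨hpu.le, le_refl _⟩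
        have e2 := hf0 u ⟨le_refl _, huv0.le⟩
        rw [ha] at e1
        linarith
      refine ⟨psi u, v0, 0, b0, hp0, hpu, huv0, hv01, fun y hy => ?_⟩
      rcases le_total y u with h | h
      · have := hab y ⟨hy.1, h⟩
        rw [ha, hbb] at this
        linarith
      · exact hf0 y ⟨h, hy.2⟩
    obtain ⟨σ, hσ, hRSp⟩ := hRSfull (psi u) hp0 hp1
    have hσa : σ = a := hRSuniq (psi u) σ a hRSp ⟨u, b, hpu, hu1.le, hab⟩
    rcases hσ with rfl | rfl | rfl
    · exact Finset.mem_union_left _ (Finset.mem_filter.2 ⟨hpDf, hRSp⟩)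
    · exact absurd hσa.symm ha0
    · exact Finset.mem_union_right _ (Finset.mem_filter.2 ⟨hpDf, hRSp⟩)
  have hC3 : D0.card ≤ Ds.card + Dn.card + 1 := by
    have hinj : ∀ u1 ∈ D0.erase 0, ∀ u2 ∈ D0.erase 0, psi u1 = psi u2 → u1 = u2 := by
      intro u1 h1 u2 h2 heq
      by_contra hne
      have key : ∀ w1 w2 : ℝ, w1 ∈ D0.erase 0 → w2 ∈ D0.erase 0 → w1 < w2 →
          psi w1 ≠ psi w2 := by
        intro w1 w2 hw1 hw2 hlt heq2
        obtain ⟨hw10, _, _, _⟩ := hE0 w1 hw1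
        obtain ⟨hw20, _, _, _⟩ := hE0 w2 hw2
        obtain ⟨hp1u, _, _⟩ := hpsi w1 hw10
        obtain ⟨_, _, hpmax2⟩ := hpsi w2 hw20
        have hw1Bff : w1 ∈ Bff := by
          obtain ⟨hune, huD0⟩ := Finset.mem_erase.1 hw1
          have huDf := (Finset.mem_filter.1 huD0).1
          exact Finset.mem_insert_of_mem huDf
        have := hpmax2 w1 hw1Bff hlt
        rw [← heq2] at this
        linarith
      rcases lt_or_gt_of_ne hne with h | h
      · exact key u1 u2 h1 h2 h heq
      · exact key u2 u1 h2 h1 h heq.symm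
    have h1 : (D0.erase 0).card ≤ (Ds ∪ Dn).card :=
      Finset.card_le_card_of_injOn psi hpsimem hinj
    have h3 : (Ds ∪ Dn).card ≤ Ds.card + Dn.card := Finset.card_union_le _ _
    by_cases h0 : (0:ℝ) ∈ D0
    · have := Finset.card_erase_add_one h0
      omega
    · rw [Finset.erase_eq_of_notMem h0] at h1
      omega
  -- totals
  have hDfcard : Df.card ≤ 4 * k + 1 := by omega
  have hBffcard : Bff.card ≤ 4 * k + 2 :=
    le_trans (Finset.card_insert_le _ _) (by omega)
  -- assemble
  apply pw_assemble F (4 * k + 1) Bff h0Bff h1Bff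
    (fun x hx => ⟨(hBffsub x hx).1, (hBffsub x hx).2⟩) (by omega)
  intro u hu v hv huv hcons
  apply hEXT' u v (hBffsub u hu).1 huv (hBffsub v hv).2
  intro z h1 h2 hzB0
  exact hcons z (Finset.mem_insert_of_mem (Finset.mem_insert_of_mem hzB0)) ⟨h1, h2⟩
end
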